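/- arXiv:2504.11926 — 5 statements merged into one kernel-verified Lean document; each statement's English description precedes it below -/
import Mathlib

section
/- Let α, β > 0, let A be an m×m complex Hermitian matrix with A ≽ αI and B an n×n complex Hermitian matrix with B ≽ βI. Then for every m×n complex matrix Y the Sylvester equation A X + X B = Y has a unique solution X, and this solution satisfies the operator-norm bound ‖X‖ ≤ ‖Y‖ / (α + β). -/
open MeasureTheory

/-- The ℓ²-operator norm of a (possibly rectangular) complex matrix, i.e. the operator norm
of the associated linear map between the corresponding Euclidean spaces. -/
noncomputable def l2OpNorm {m n : ℕ} (A : Matrix (Fin m) (Fin n) ℂ) : ℝ :=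
  ‖LinearMap.toContinuousLinearMap (Matrix.toEuclideanLin A)‖

lemma toEuclideanLin_mul' {m n k : ℕ} (A : Matrix (Fin m) (Fin n) ℂ)
    (B : Matrix (Fin n) (Fin k) ℂ) (v : EuclideanSpace ℂ (Fin k)) :
    Matrix.toEuclideanLin (A * B) v = Matrix.toEuclideanLin A (Matrix.toEuclideanLin B v) := by
  simp [Matrix.toEuclideanLin_apply, Matrix.mulVec_mulVec]

lemma l2OpNorm_zero_of_eq {m n : ℕ} (X : Matrix (Fin m) (Fin n) ℂ)
    (h : l2OpNorm X = 0) : X = 0 := by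
  have h1 : LinearMap.toContinuousLinearMap (Matrix.toEuclideanLin X) = 0 := by
    rwa [l2OpNorm, norm_eq_zero] at h
  have h2 : Matrix.toEuclideanLin X = 0 := by
    apply LinearMap.ext
    intro v
    have := congrArg (fun T : _ →L[ℂ] _ => T v) h1
    simpa using this
  exact (map_eq_zero_iff _ Matrix.toEuclideanLin.injective).mp h2

/-- Existence of a top singular pair for a nonzero matrix. -/
lemma exists_singular_pair {m n : ℕ} (X : Matrix (Fin m) (Fin n) ℂ) (hX : X ≠ 0) :
    ∃ (u : EuclideanSpace ℂ (Fin m)) (v : EuclideanSpace ℂ (Fin n)), ‖u‖ = 1 ∧ ‖v‖ = 1 ∧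
      Matrix.toEuclideanLin X v = ((l2OpNorm X : ℝ) : ℂ) • u ∧
      ∀ w : EuclideanSpace ℂ (Fin n),
        (inner ℂ u (Matrix.toEuclideanLin X w) : ℂ) = ((l2OpNorm X : ℝ) : ℂ) * inner ℂ v w := by
  classical
  set E := EuclideanSpace ℂ (Fin n)
  set F := EuclideanSpace ℂ (Fin m)
  set Xc : E →L[ℂ] F := LinearMap.toContinuousLinearMap (Matrix.toEuclideanLin X) with hXc
  have hXcapp : ∀ v : E, Xc v = Matrix.toEuclideanLin X v := fun v => rfl
  set σ : ℝ := l2OpNorm X with hσ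
  have hσ0 : σ ≠ 0 := fun h => hX (l2OpNorm_zero_of_eq X h)
  have hσpos : 0 < σ := lt_of_le_of_ne (norm_nonneg _) (Ne.symm hσ0)
  have hn : n ≠ 0 := by
    rintro rfl
    apply hX
    ext i j
    exact j.elim0
  haveI : NeZero n := ⟨hn⟩
  -- maximize the Rayleigh quotient on the unit sphere
  set T : E →L[ℂ] E := (ContinuousLinearMap.adjoint Xc).comp Xc with hT
  have hTsa : IsSelfAdjoint T := by
    rw [IsSelfAdjoint, ContinuousLinearMap.star_eq_adjoint, hT,
      ContinuousLinearMap.adjoint_comp, ContinuousLinearMap.adjoint_adjoint]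
  have hTapp : ∀ x : E, T.reApplyInnerSelf x = ‖Xc x‖ ^ 2 := by
    intro x
    rw [ContinuousLinearMap.reApplyInnerSelf_apply]
    have : (inner ℂ (T x) x : ℂ) = inner ℂ (Xc x) (Xc x) := by
      rw [hT, ContinuousLinearMap.comp_apply, ContinuousLinearMap.adjoint_inner_left]
    rw [this, inner_self_eq_norm_sq]
  have hsphere : (Metric.sphere (0 : E) 1).Nonempty :=
    NormedSpace.sphere_nonempty.mpr zero_le_one
  obtain ⟨v₀, hv₀mem, hmax⟩ := (isCompact_sphere (0 : E) 1).exists_isMaxOn hsphere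
    T.reApplyInnerSelf_continuous.continuousOn
  have hv₀norm : ‖v₀‖ = 1 := mem_sphere_zero_iff_norm.mp hv₀mem
  have hv₀ne : v₀ ≠ 0 := by
    intro h; rw [h, norm_zero] at hv₀norm; exact one_ne_zero hv₀norm.symm
  -- v₀ attains the operator norm
  have hle : ∀ v : E, ‖Xc v‖ ≤ ‖Xc v₀‖ * ‖v‖ := by
    intro v
    rcases eq_or_ne v 0 with rfl | hv
    · simp
    · have hvn : (0 : ℝ) < ‖v‖ := norm_pos_iff.mpr hv
      set w : E := ((‖v‖⁻¹ : ℝ) : ℂ) • v with hw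
      have hwnorm : ‖w‖ = 1 := by
        rw [hw, norm_smul]
        simp [abs_of_pos (inv_pos.mpr hvn), inv_mul_cancel₀ (ne_of_gt hvn)]
        rw [abs_of_pos hvn, inv_mul_cancel₀ (ne_of_gt hvn)]
      have hwmem : w ∈ Metric.sphere (0 : E) 1 := mem_sphere_zero_iff_norm.mpr hwnorm
      have h1 : ‖Xc w‖ ^ 2 ≤ ‖Xc v₀‖ ^ 2 := by
        have h := hmax hwmem
        simp only [Set.mem_setOf_eq] at h
        rwa [hTapp, hTapp] at h
      have h2 : ‖Xc w‖ ≤ ‖Xc v₀‖ := by nlinarith [norm_nonneg (Xc w), norm_nonneg (Xc v₀)]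
      have h3 : ‖Xc w‖ = ‖v‖⁻¹ * ‖Xc v‖ := by
        rw [hw, _root_.map_smul, norm_smul]
        simp [Real.norm_eq_abs, abs_of_pos (inv_pos.mpr hvn)]
        exact Or.inl (norm_nonneg _)
      rw [h3] at h2
      calc ‖Xc v‖ = (‖v‖⁻¹ * ‖Xc v‖) * ‖v‖ := by field_simp
        _ ≤ ‖Xc v₀‖ * ‖v‖ := by
            apply mul_le_mul_of_nonneg_right h2 (le_of_lt hvn)
  have hXv₀ : ‖Xc v₀‖ = σ := by
    apply le_antisymm
    · have := Xc.le_opNorm v₀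
      rwa [hv₀norm, mul_one] at this
    · exact Xc.opNorm_le_bound (norm_nonneg _) hle
  -- eigenvector property
  have hmax' : IsMaxOn T.reApplyInnerSelf (Metric.sphere (0 : E) ‖v₀‖) v₀ := by
    rwa [hv₀norm]
  have heig : T v₀ = ((T.rayleighQuotient v₀ : ℝ) : ℂ) • v₀ :=
    hTsa.eq_smul_self_of_isLocalExtrOn (Or.inr hmax'.localize)
  have hray : T.rayleighQuotient v₀ = σ ^ 2 := by
    rw [ContinuousLinearMap.rayleighQuotient, hTapp, hXv₀, hv₀norm]
    simp
  have hTv₀ : T v₀ = ((σ ^ 2 : ℝ) : ℂ) • v₀ := by rw [heig, hray]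
  -- define u
  set u : F := ((σ⁻¹ : ℝ) : ℂ) • Xc v₀ with hu
  have hunorm : ‖u‖ = 1 := by
    have hn1 : ‖((σ⁻¹ : ℝ) : ℂ)‖ = σ⁻¹ := by
      simp [Real.norm_eq_abs, abs_of_pos (inv_pos.mpr hσpos)]
      exact hσpos.le
    rw [hu, norm_smul, hn1, hXv₀, inv_mul_cancel₀ hσ0]
  have hXv₀u : Matrix.toEuclideanLin X v₀ = ((σ : ℝ) : ℂ) • u := by
    rw [← hXcapp, hu, smul_smul, ← Complex.ofReal_mul, mul_inv_cancel₀ hσ0]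
    simp
  have hadj : ContinuousLinearMap.adjoint Xc u = ((σ : ℝ) : ℂ) • v₀ := by
    have hσσ : σ⁻¹ * σ ^ 2 = σ := by
      rw [sq, ← mul_assoc, inv_mul_cancel₀ hσ0, one_mul]
    rw [hu, _root_.map_smul]
    have h4 : ContinuousLinearMap.adjoint Xc (Xc v₀) = T v₀ := rfl
    rw [h4, hTv₀, smul_smul, ← Complex.ofReal_mul, hσσ]
  refine ⟨u, v₀, hunorm, hv₀norm, hXv₀u, fun w => ?_⟩
  rw [← hXcapp, ← ContinuousLinearMap.adjoint_inner_left, hadj, inner_smul_left,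
    Complex.conj_ofReal]

/-- **Unique solvability of the Sylvester equation with a norm bound.**
If `A` is Hermitian with `A ≽ αI`, `B` is Hermitian with `B ≽ βI`, and `α, β > 0`, then for
every matrix `Y` the Sylvester equation `A X + X B = Y` has a unique solution `X`, and any
solution satisfies `‖X‖ ≤ ‖Y‖ / (α + β)` in the ℓ²-operator norm. -/
theorem sylvester_existsUnique_norm_bound {m n : ℕ} (α β : ℝ) (hα : 0 < α) (hβ : 0 < β)
    (A : Matrix (Fin m) (Fin m) ℂ) (B : Matrix (Fin n) (Fin n) ℂ)
    (hA : A.IsHermitian) (hB : B.IsHermitian)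
    (hAα : ∀ u : EuclideanSpace ℂ (Fin m),
      α * ‖u‖ ^ 2 ≤ ((inner ℂ u (Matrix.toEuclideanLin A u) : ℂ)).re)
    (hBβ : ∀ u : EuclideanSpace ℂ (Fin n),
      β * ‖u‖ ^ 2 ≤ ((inner ℂ u (Matrix.toEuclideanLin B u) : ℂ)).re)
    (Y : Matrix (Fin m) (Fin n) ℂ) :
    (∃! X : Matrix (Fin m) (Fin n) ℂ, A * X + X * B = Y) ∧
    ∀ X : Matrix (Fin m) (Fin n) ℂ, A * X + X * B = Y → l2OpNorm X ≤ l2OpNorm Y / (α + β) := by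
  have hαβ : (0 : ℝ) < α + β := by linarith
  -- the norm bound, for arbitrary Y
  have bound : ∀ (Y' : Matrix (Fin m) (Fin n) ℂ) (X : Matrix (Fin m) (Fin n) ℂ),
      A * X + X * B = Y' → l2OpNorm X ≤ l2OpNorm Y' / (α + β) := by
    intro Y' X hXeq
    rcases eq_or_ne X 0 with rfl | hX
    · have : l2OpNorm (0 : Matrix (Fin m) (Fin n) ℂ) = 0 := by
        simp [l2OpNorm]
      rw [this]
      exact div_nonneg (norm_nonneg _) (le_of_lt hαβ)
    · obtain ⟨u, v, hu1, hv1, hXv, hXadj⟩ := exists_singular_pair X hX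
      set σ := l2OpNorm X with hσ
      -- compute Re ⟪u, Y' v⟫
      have hYv : Matrix.toEuclideanLin Y' v =
          Matrix.toEuclideanLin A (Matrix.toEuclideanLin X v) +
          Matrix.toEuclideanLin X (Matrix.toEuclideanLin B v) := by
        rw [← hXeq, map_add, LinearMap.add_apply, toEuclideanLin_mul', toEuclideanLin_mul']
      have key : σ * (α + β) ≤ ((inner ℂ u (Matrix.toEuclideanLin Y' v) : ℂ)).re := by
        rw [hYv, inner_add_right]
        have h1 : (inner ℂ u (Matrix.toEuclideanLin A (Matrix.toEuclideanLin X v)) : ℂ) =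
            ((σ : ℝ) : ℂ) * inner ℂ u (Matrix.toEuclideanLin A u) := by
          rw [hXv, _root_.map_smul, inner_smul_right]
        have h2 : (inner ℂ u (Matrix.toEuclideanLin X (Matrix.toEuclideanLin B v)) : ℂ) =
            ((σ : ℝ) : ℂ) * inner ℂ v (Matrix.toEuclideanLin B v) := hXadj _
        rw [h1, h2]
        have hσnn : 0 ≤ σ := norm_nonneg _
        have hAu := hAα u
        have hBv := hBβ v
        rw [hu1] at hAu
        rw [hv1] at hBv
        simp only [Complex.add_re, Complex.mul_re, Complex.ofReal_re, Complex.ofReal_im,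
          zero_mul, sub_zero]
        nlinarith
      have hup : ((inner ℂ u (Matrix.toEuclideanLin Y' v) : ℂ)).re ≤ l2OpNorm Y' := by
        have h1 : ((inner ℂ u (Matrix.toEuclideanLin Y' v) : ℂ)).re ≤
            ‖(inner ℂ u (Matrix.toEuclideanLin Y' v) : ℂ)‖ := Complex.re_le_norm _
        have h2 : ‖(inner ℂ u (Matrix.toEuclideanLin Y' v) : ℂ)‖ ≤
            ‖u‖ * ‖Matrix.toEuclideanLin Y' v‖ := norm_inner_le_norm _ _
        have h3 : ‖Matrix.toEuclideanLin Y' v‖ ≤ l2OpNorm Y' * ‖v‖ := by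
          have := (LinearMap.toContinuousLinearMap (Matrix.toEuclideanLin Y')).le_opNorm v
          simpa [l2OpNorm] using this
        rw [hu1] at h2
        rw [hv1, mul_one] at h3
        linarith
      rw [le_div_iff₀ hαβ]
      linarith
  refine ⟨?_, bound Y⟩
  -- the Sylvester linear map
  set S : Matrix (Fin m) (Fin n) ℂ →ₗ[ℂ] Matrix (Fin m) (Fin n) ℂ :=
    { toFun := fun X => A * X + X * B
      map_add' := fun X₁ X₂ => by
        simp only [Matrix.mul_add, Matrix.add_mul]
        abel
      map_smul' := fun c X => by
        simp only [Matrix.mul_smul, Matrix.smul_mul, smul_add, RingHom.id_apply] } with hS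
  have hSapp : ∀ X, S X = A * X + X * B := fun X => rfl
  have hSinj : Function.Injective S := by
    rw [injective_iff_map_eq_zero]
    intro X hX0
    have := bound 0 X (by rw [← hSapp, hX0])
    have hz : l2OpNorm (0 : Matrix (Fin m) (Fin n) ℂ) = 0 := by simp [l2OpNorm]
    rw [hz, zero_div] at this
    have : l2OpNorm X = 0 := le_antisymm this (norm_nonneg _)
    exact l2OpNorm_zero_of_eq X this
  have hSsurj : Function.Surjective S := LinearMap.injective_iff_surjective.mp hSinj
  obtain ⟨X, hX⟩ := hSsurj Y
  refine ⟨X, hX, fun X' hX' => hSinj ?_⟩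
  show A * X' + X' * B = A * X + X * B
  rw [hX']
  exact hX.symm
end

section
/- Let α, β > 0 and let A, B be n×n complex Hermitian positive definite matrices with A ≽ α²I and B ≽ β²I. Then the square-root perturbation bound ‖A^{1/2} − B^{1/2}‖ ≤ ‖A − B‖ / (α + β) holds in the ℓ²-operator norm. -/
open MeasureTheory
open scoped ComplexOrder

/-- Real powers of a Hermitian matrix, defined spectrally via the continuous functional
calculus; for a positive definite matrix, `herPow A hA (1/2)` is its unique Hermitian positive
definite square root. -/
noncomputable def herPow {N : ℕ} (A : Matrix (Fin N) (Fin N) ℂ) (hA : A.IsHermitian) (r : ℝ) :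
    Matrix (Fin N) (Fin N) ℂ :=
  hA.cfc (fun x : ℝ => x ^ r)

section Aux

open Matrix

variable {N : ℕ}

/-- `hM.cfc f` acts on the eigenvector basis of `M` by the eigenvalues `f (μ i)`. -/
lemma cfc_mulVec_eigenvectorBasis {M : Matrix (Fin N) (Fin N) ℂ} (hM : M.IsHermitian)
    (f : ℝ → ℝ) (j : Fin N) :
    hM.cfc f *ᵥ ⇑(hM.eigenvectorBasis j)
      = ((f (hM.eigenvalues j) : ℝ) : ℂ) • ⇑(hM.eigenvectorBasis j) := by
  rw [Matrix.IsHermitian.cfc, Unitary.conjStarAlgAut_apply, ← Matrix.mulVec_mulVec, ← Matrix.mulVec_mulVec,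
    hM.star_eigenvectorUnitary_mulVec, Matrix.diagonal_mulVec_single]
  have : (Pi.single j ((RCLike.ofReal ∘ f ∘ hM.eigenvalues) j * 1) : Fin N → ℂ)
      = ((f (hM.eigenvalues j) : ℝ) : ℂ) • (Pi.single j (1 : ℂ) : Fin N → ℂ) := by
    funext k
    simp [Pi.single_apply, Pi.smul_apply, smul_eq_mul, mul_ite]
  rw [this, Matrix.mulVec_smul, hM.eigenvectorUnitary_mulVec]

lemma cfc_isHermitian {M : Matrix (Fin N) (Fin N) ℂ} (hM : M.IsHermitian) (f : ℝ → ℝ) :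
    (hM.cfc f).IsHermitian := by
  rw [Matrix.IsHermitian.cfc, Unitary.conjStarAlgAut_apply, Matrix.star_eq_conjTranspose]
  exact Matrix.isHermitian_mul_mul_conjTranspose _
    (Matrix.isHermitian_diagonal_iff.mpr fun i => by
      simp [_root_.IsSelfAdjoint, Complex.star_def, Complex.conj_ofReal])

lemma cfc_mul_self {M : Matrix (Fin N) (Fin N) ℂ} (hM : M.IsHermitian) (f : ℝ → ℝ)
    (hf : ∀ i, f (hM.eigenvalues i) * f (hM.eigenvalues i) = hM.eigenvalues i) :
    hM.cfc f * hM.cfc f = M := by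
  rw [Matrix.IsHermitian.cfc, Unitary.conjStarAlgAut_apply]
  have hU : (star (hM.eigenvectorUnitary : Matrix (Fin N) (Fin N) ℂ))
      * (hM.eigenvectorUnitary : Matrix (Fin N) (Fin N) ℂ) = 1 :=
    Unitary.star_mul_self_of_mem (SetLike.coe_mem _)
  calc (hM.eigenvectorUnitary : Matrix (Fin N) (Fin N) ℂ)
        * Matrix.diagonal (RCLike.ofReal ∘ f ∘ hM.eigenvalues)
        * star (hM.eigenvectorUnitary : Matrix (Fin N) (Fin N) ℂ)
        * ((hM.eigenvectorUnitary : Matrix (Fin N) (Fin N) ℂ)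
          * Matrix.diagonal (RCLike.ofReal ∘ f ∘ hM.eigenvalues)
          * star (hM.eigenvectorUnitary : Matrix (Fin N) (Fin N) ℂ))
      = (hM.eigenvectorUnitary : Matrix (Fin N) (Fin N) ℂ)
        * (Matrix.diagonal (RCLike.ofReal ∘ f ∘ hM.eigenvalues)
          * Matrix.diagonal (RCLike.ofReal ∘ f ∘ hM.eigenvalues))
        * star (hM.eigenvectorUnitary : Matrix (Fin N) (Fin N) ℂ) := by
        rw [show ∀ a b c d e g : Matrix (Fin N) (Fin N) ℂ,
          a * b * c * (d * e * g) = a * (b * (c * d) * e) * g from fun a b c d e g => by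
            simp only [mul_assoc], hU, mul_one]
    _ = (hM.eigenvectorUnitary : Matrix (Fin N) (Fin N) ℂ)
        * Matrix.diagonal (RCLike.ofReal ∘ hM.eigenvalues)
        * star (hM.eigenvectorUnitary : Matrix (Fin N) (Fin N) ℂ) := by
        have hdiag : (Matrix.diagonal (RCLike.ofReal ∘ f ∘ hM.eigenvalues) : Matrix (Fin N) (Fin N) ℂ)
            * Matrix.diagonal (RCLike.ofReal ∘ f ∘ hM.eigenvalues)
            = Matrix.diagonal (RCLike.ofReal ∘ hM.eigenvalues) := by
          rw [Matrix.diagonal_mul_diagonal]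
          have : (fun i => ((f (hM.eigenvalues i) : ℝ) : ℂ) * ((f (hM.eigenvalues i) : ℝ) : ℂ))
              = RCLike.ofReal ∘ hM.eigenvalues := by
            funext i
            simp only [Function.comp_apply, ← Complex.ofReal_mul, hf i]
            rfl
          exact congrArg Matrix.diagonal this
        rw [hdiag]
    _ = M := by have h := hM.spectral_theorem; rw [Unitary.conjStarAlgAut_apply] at h; exact h.symm

lemma toEuclideanLin_eig {M : Matrix (Fin N) (Fin N) ℂ} {u : EuclideanSpace ℂ (Fin N)} {c : ℂ}
    (h : M *ᵥ ⇑u = c • ⇑u) : Matrix.toEuclideanLin M u = c • u := by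
  apply (WithLp.equiv 2 (Fin N → ℂ)).injective
  simpa [Matrix.piLp_ofLp_toEuclideanLin] using h

lemma toEuclideanLin_mul (M P : Matrix (Fin N) (Fin N) ℂ) (u : EuclideanSpace ℂ (Fin N)) :
    Matrix.toEuclideanLin (M * P) u = Matrix.toEuclideanLin M (Matrix.toEuclideanLin P u) := by
  apply (WithLp.equiv 2 (Fin N → ℂ)).injective
  simp [Matrix.piLp_ofLp_toEuclideanLin, Matrix.mulVec_mulVec]

/-- The coordinates of `toEuclideanLin M u` in an eigenbasis of the Hermitian matrix `M`. -/
lemma repr_toEuclideanLin {M : Matrix (Fin N) (Fin N) ℂ} (hM : M.IsHermitian)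
    (B : OrthonormalBasis (Fin N) ℂ (EuclideanSpace ℂ (Fin N))) (d : Fin N → ℝ)
    (hMB : ∀ j, M *ᵥ ⇑(B j) = ((d j : ℝ) : ℂ) • ⇑(B j))
    (u : EuclideanSpace ℂ (Fin N)) (i : Fin N) :
    B.repr (Matrix.toEuclideanLin M u) i = ((d i : ℝ) : ℂ) * B.repr u i := by
  have hsym := Matrix.isHermitian_iff_isSymmetric.mp hM
  rw [B.repr_apply_apply, B.repr_apply_apply, ← hsym (B i) u,
    toEuclideanLin_eig (hMB i), inner_smul_left, Complex.conj_ofReal]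

lemma opnorm_le_of_eigen {M : Matrix (Fin N) (Fin N) ℂ} (hM : M.IsHermitian)
    (B : OrthonormalBasis (Fin N) ℂ (EuclideanSpace ℂ (Fin N))) (d : Fin N → ℝ)
    (hMB : ∀ j, M *ᵥ ⇑(B j) = ((d j : ℝ) : ℂ) • ⇑(B j))
    (C : ℝ) (hC : 0 ≤ C) (hd : ∀ i, |d i| ≤ C) : l2OpNorm M ≤ C := by
  rw [l2OpNorm]
  apply ContinuousLinearMap.opNorm_le_bound _ hC
  intro u
  have key : ‖Matrix.toEuclideanLin M u‖ ≤ C * ‖u‖ := by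
    have h1 : ‖Matrix.toEuclideanLin M u‖ = ‖B.repr (Matrix.toEuclideanLin M u)‖ :=
      (B.repr.norm_map _).symm
    have h2 : ‖u‖ = ‖B.repr u‖ := (B.repr.norm_map _).symm
    rw [h1, h2]
    have hsq : ‖B.repr (Matrix.toEuclideanLin M u)‖ ^ 2 ≤ (C * ‖B.repr u‖) ^ 2 := by
      rw [PiLp.norm_sq_eq_of_L2, mul_pow, PiLp.norm_sq_eq_of_L2, Finset.mul_sum]
      apply Finset.sum_le_sum
      intro i _
      rw [repr_toEuclideanLin hM B d hMB u i]
      rw [norm_mul]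
      have : ‖((d i : ℝ) : ℂ)‖ = |d i| := by simp
      rw [this, mul_pow]
      have h3 : |d i| ^ 2 ≤ C ^ 2 := by
        apply pow_le_pow_left₀ (abs_nonneg _) (hd i)
      exact mul_le_mul_of_nonneg_right h3 (by positivity)
    have := (pow_le_pow_iff_left₀ (norm_nonneg _) (by positivity) (two_ne_zero)).mp hsq
    exact this
  simpa using key

lemma inner_toEuclideanLin (M : Matrix (Fin N) (Fin N) ℂ) (v : EuclideanSpace ℂ (Fin N)) :
    (inner ℂ v (Matrix.toEuclideanLin M v) : ℂ)
      = dotProduct (star (WithLp.equiv 2 (Fin N → ℂ) v))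
        (M *ᵥ WithLp.equiv 2 (Fin N → ℂ) v) := by
  rw [EuclideanSpace.inner_eq_star_dotProduct, dotProduct_comm]; rfl

lemma re_inner_eigenvectorBasis {M : Matrix (Fin N) (Fin N) ℂ} (hM : M.IsHermitian) (i : Fin N) :
    ((inner ℂ (hM.eigenvectorBasis i)
      (Matrix.toEuclideanLin M (hM.eigenvectorBasis i)) : ℂ)).re = hM.eigenvalues i := by
  rw [inner_toEuclideanLin]
  simpa using (hM.eigenvalues_eq i).symm

lemma inner_lower_bound {M : Matrix (Fin N) (Fin N) ℂ} (hM : M.IsHermitian)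
    (B : OrthonormalBasis (Fin N) ℂ (EuclideanSpace ℂ (Fin N))) (d : Fin N → ℝ)
    (hMB : ∀ j, M *ᵥ ⇑(B j) = ((d j : ℝ) : ℂ) • ⇑(B j))
    (c : ℝ) (hc : ∀ i, c ≤ d i) (u : EuclideanSpace ℂ (Fin N)) :
    c * ‖u‖ ^ 2 ≤ ((inner ℂ u (Matrix.toEuclideanLin M u) : ℂ)).re := by
  have h0 : (inner ℂ u (Matrix.toEuclideanLin M u) : ℂ)
      = inner ℂ (B.repr u) (B.repr (Matrix.toEuclideanLin M u)) :=
    (B.repr.inner_map_map _ _).symm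
  rw [h0, PiLp.inner_apply]
  have hterm : ∀ i : Fin N,
      (inner ℂ (B.repr u i) (B.repr (Matrix.toEuclideanLin M u) i) : ℂ).re
        = d i * ‖B.repr u i‖ ^ 2 := by
    intro i
    rw [repr_toEuclideanLin hM B d hMB u i, RCLike.inner_apply]
    have : ((d i : ℝ) : ℂ) * B.repr u i * (starRingEnd ℂ) (B.repr u i)
        = ((d i : ℝ) : ℂ) * ((starRingEnd ℂ) (B.repr u i) * B.repr u i) := by ring
    rw [this, Complex.conj_mul', ← Complex.ofReal_pow, ← Complex.ofReal_mul,
      Complex.ofReal_re]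
  rw [Complex.re_sum]
  have hnorm : ‖u‖ ^ 2 = ∑ i, ‖B.repr u i‖ ^ 2 := by
    rw [← PiLp.norm_sq_eq_of_L2, B.repr.norm_map]
  rw [hnorm, Finset.mul_sum]
  apply Finset.sum_le_sum
  intro i _
  rw [hterm i]
  exact mul_le_mul_of_nonneg_right (hc i) (by positivity)

end Aux

/-- **Square-root perturbation bound.** If `A, B` are Hermitian positive definite with
`A ≽ α²I`, `B ≽ β²I` for some `α, β > 0`, then `‖A^{1/2} - B^{1/2}‖ ≤ ‖A - B‖ / (α + β)`
in the ℓ²-operator norm. -/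
theorem sqrt_perturbation_bound {n : ℕ} (α β : ℝ) (hα : 0 < α) (hβ : 0 < β)
    (A B : Matrix (Fin n) (Fin n) ℂ) (hA : A.PosDef) (hB : B.PosDef)
    (hAα : ∀ u : EuclideanSpace ℂ (Fin n),
      α ^ 2 * ‖u‖ ^ 2 ≤ ((inner ℂ u (Matrix.toEuclideanLin A u) : ℂ)).re)
    (hBβ : ∀ u : EuclideanSpace ℂ (Fin n),
      β ^ 2 * ‖u‖ ^ 2 ≤ ((inner ℂ u (Matrix.toEuclideanLin B u) : ℂ)).re) :
    l2OpNorm (herPow A hA.1 (1/2) - herPow B hB.1 (1/2)) ≤ l2OpNorm (A - B) / (α + β) := by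
  have hαβ : (0:ℝ) < α + β := by positivity
  set f : ℝ → ℝ := fun x : ℝ => x ^ (1/2 : ℝ) with hfdef
  set S : Matrix (Fin n) (Fin n) ℂ := hA.1.cfc f with hSdef
  set T : Matrix (Fin n) (Fin n) ℂ := hB.1.cfc f with hTdef
  have hgoalS : herPow A hA.1 (1/2) = S := rfl
  have hgoalT : herPow B hB.1 (1/2) = T := rfl
  rw [hgoalS, hgoalT]
  -- eigenvalue lower bounds for A and B
  have hμA : ∀ i, α ^ 2 ≤ hA.1.eigenvalues i := by
    intro i
    have h1 := hAα (hA.1.eigenvectorBasis i)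
    rw [re_inner_eigenvectorBasis hA.1 i, hA.1.eigenvectorBasis.orthonormal.1 i] at h1
    simpa using h1
  have hμB : ∀ i, β ^ 2 ≤ hB.1.eigenvalues i := by
    intro i
    have h1 := hBβ (hB.1.eigenvectorBasis i)
    rw [re_inner_eigenvectorBasis hB.1 i, hB.1.eigenvectorBasis.orthonormal.1 i] at h1
    simpa using h1
  have hfA : ∀ i, α ≤ f (hA.1.eigenvalues i) := by
    intro i
    have h0 : (0:ℝ) ≤ hA.1.eigenvalues i := le_trans (by positivity) (hμA i)
    rw [hfdef]
    simp only
    rw [← Real.sqrt_eq_rpow]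
    calc α = Real.sqrt (α ^ 2) := by rw [Real.sqrt_sq hα.le]
      _ ≤ Real.sqrt (hA.1.eigenvalues i) := Real.sqrt_le_sqrt (hμA i)
  have hfB : ∀ i, β ≤ f (hB.1.eigenvalues i) := by
    intro i
    have h0 : (0:ℝ) ≤ hB.1.eigenvalues i := le_trans (by positivity) (hμB i)
    rw [hfdef]
    simp only
    rw [← Real.sqrt_eq_rpow]
    calc β = Real.sqrt (β ^ 2) := by rw [Real.sqrt_sq hβ.le]
      _ ≤ Real.sqrt (hB.1.eigenvalues i) := Real.sqrt_le_sqrt (hμB i)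
  -- square root property
  have hsq : ∀ (μ : ℝ), 0 < μ → f μ * f μ = μ := by
    intro μ hμ
    rw [hfdef]
    simp only
    rw [← Real.rpow_add hμ]
    norm_num
  have hSS : S * S = A := cfc_mul_self hA.1 f fun i =>
    hsq _ (lt_of_lt_of_le (by positivity) (hμA i))
  have hTT : T * T = B := cfc_mul_self hB.1 f fun i =>
    hsq _ (lt_of_lt_of_le (by positivity) (hμB i))
  have hSH : S.IsHermitian := cfc_isHermitian hA.1 f
  have hTH : T.IsHermitian := cfc_isHermitian hB.1 f
  have hSlow : ∀ u : EuclideanSpace ℂ (Fin n),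
      α * ‖u‖ ^ 2 ≤ ((inner ℂ u (Matrix.toEuclideanLin S u) : ℂ)).re :=
    inner_lower_bound hSH hA.1.eigenvectorBasis (fun i => f (hA.1.eigenvalues i))
      (fun j => cfc_mulVec_eigenvectorBasis hA.1 f j) α hfA
  have hTlow : ∀ u : EuclideanSpace ℂ (Fin n),
      β * ‖u‖ ^ 2 ≤ ((inner ℂ u (Matrix.toEuclideanLin T u) : ℂ)).re :=
    inner_lower_bound hTH hB.1.eigenvectorBasis (fun i => f (hB.1.eigenvalues i))
      (fun j => cfc_mulVec_eigenvectorBasis hB.1 f j) β hfB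
  set X : Matrix (Fin n) (Fin n) ℂ := S - T with hXdef
  have hXH : X.IsHermitian := hSH.sub hTH
  have hXW : ∀ j, Matrix.mulVec X ⇑(hXH.eigenvectorBasis j)
      = ((hXH.eigenvalues j : ℝ) : ℂ) • ⇑(hXH.eigenvectorBasis j) := by
    intro j
    rw [hXH.mulVec_eigenvectorBasis]
    funext k
    simp [Complex.real_smul]
  rcases Nat.eq_zero_or_pos n with h0 | hpos
  · subst h0
    rw [l2OpNorm]
    apply ContinuousLinearMap.opNorm_le_bound _ (div_nonneg (by
      rw [l2OpNorm]; exact norm_nonneg _) hαβ.le)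
    intro u
    have : u = 0 := Subsingleton.elim u 0
    subst this
    simp
  · haveI : Nonempty (Fin n) := ⟨⟨0, hpos⟩⟩
    obtain ⟨i₀, hi₀⟩ := Finite.exists_max (fun i => |hXH.eigenvalues i|)
    set ν : ℝ := hXH.eigenvalues i₀ with hνdef
    have hXnorm : l2OpNorm X ≤ |ν| :=
      opnorm_le_of_eigen hXH hXH.eigenvectorBasis hXH.eigenvalues hXW _ (abs_nonneg _) hi₀
    set v : EuclideanSpace ℂ (Fin n) := hXH.eigenvectorBasis i₀ with hvdef
    have hv : ‖v‖ = 1 := hXH.eigenvectorBasis.orthonormal.1 i₀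
    have hXv : Matrix.toEuclideanLin X v = ((ν : ℝ) : ℂ) • v := toEuclideanLin_eig (hXW i₀)
    have hABX : A - B = S * X + X * T := by
      rw [← hSS, ← hTT, hXdef]
      noncomm_ring
    have hinner : (inner ℂ v (Matrix.toEuclideanLin (A - B) v) : ℂ)
        = ((ν : ℝ) : ℂ) * ((inner ℂ v (Matrix.toEuclideanLin S v) : ℂ)
          + (inner ℂ v (Matrix.toEuclideanLin T v) : ℂ)) := by
      rw [hABX, map_add, LinearMap.add_apply, inner_add_right,
        toEuclideanLin_mul, toEuclideanLin_mul, hXv, _root_.map_smul, inner_smul_right]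
      have hXsym := Matrix.isHermitian_iff_isSymmetric.mp hXH
      rw [← hXsym v (Matrix.toEuclideanLin T v), hXv, inner_smul_left, Complex.conj_ofReal]
      ring
    have hre : ((inner ℂ v (Matrix.toEuclideanLin (A - B) v) : ℂ)).re
        = ν * (((inner ℂ v (Matrix.toEuclideanLin S v) : ℂ)).re
          + ((inner ℂ v (Matrix.toEuclideanLin T v) : ℂ)).re) := by
      rw [hinner]
      simp [Complex.re_ofReal_mul]
    -- lower bound on the Rayleigh quotient sum
    have hS1 : α ≤ ((inner ℂ v (Matrix.toEuclideanLin S v) : ℂ)).re := by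
      have := hSlow v; rw [hv] at this; simpa using this
    have hT1 : β ≤ ((inner ℂ v (Matrix.toEuclideanLin T v) : ℂ)).re := by
      have := hTlow v; rw [hv] at this; simpa using this
    -- upper bound: |re ⟪v, (A-B)v⟫| ≤ l2OpNorm (A - B)
    have hub : |((inner ℂ v (Matrix.toEuclideanLin (A - B) v) : ℂ)).re| ≤ l2OpNorm (A - B) := by
      have h1 : |((inner ℂ v (Matrix.toEuclideanLin (A - B) v) : ℂ)).re|
          ≤ ‖(inner ℂ v (Matrix.toEuclideanLin (A - B) v) : ℂ)‖ := by
        exact Complex.abs_re_le_norm _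
      have h2 : ‖(inner ℂ v (Matrix.toEuclideanLin (A - B) v) : ℂ)‖
          ≤ ‖v‖ * ‖Matrix.toEuclideanLin (A - B) v‖ := norm_inner_le_norm _ _
      have h3 : ‖Matrix.toEuclideanLin (A - B) v‖ ≤ l2OpNorm (A - B) * ‖v‖ := by
        rw [l2OpNorm]
        exact (LinearMap.toContinuousLinearMap (Matrix.toEuclideanLin (A - B))).le_opNorm v
      rw [hv] at h2 h3
      simp only [one_mul, mul_one] at h2 h3
      exact h1.trans (h2.trans h3)
    have hlb : |ν| * (α + β) ≤ l2OpNorm (A - B) := by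
      have hsum : α + β ≤ ((inner ℂ v (Matrix.toEuclideanLin S v) : ℂ)).re
          + ((inner ℂ v (Matrix.toEuclideanLin T v) : ℂ)).re := add_le_add hS1 hT1
      have : |ν| * (α + β) ≤ |((inner ℂ v (Matrix.toEuclideanLin (A - B) v) : ℂ)).re| := by
        rw [hre, abs_mul]
        apply mul_le_mul_of_nonneg_left _ (abs_nonneg _)
        rw [abs_of_nonneg (le_trans hαβ.le hsum)]
        exact hsum
      exact this.trans hub
    rw [le_div_iff₀ hαβ]
    calc l2OpNorm X * (α + β) ≤ |ν| * (α + β) :=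
          mul_le_mul_of_nonneg_right hXnorm hαβ.le
      _ ≤ l2OpNorm (A - B) := hlb
end

section
/- Let A be an n×n complex Hermitian matrix with A ≽ I and let B be an n×n complex Hermitian matrix with ‖A − B‖ ≤ 1/2 in the ℓ²-operator norm. Then B is positive definite with B ≽ (1/2)I, and the quarter-power perturbation bound ‖A^{1/4} − B^{1/4}‖ ≤ ‖A − B‖ / ((1 + 2^{−1/2})(1 + 2^{−1/4})) holds. -/
open MeasureTheory
open scoped ComplexOrder

/-! ### Auxiliary machinery -/

/-- The continuous linear map on Euclidean space given by a square matrix. -/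
noncomputable def clmOf {n : ℕ} (M : Matrix (Fin n) (Fin n) ℂ) :
    EuclideanSpace ℂ (Fin n) →L[ℂ] EuclideanSpace ℂ (Fin n) :=
  LinearMap.toContinuousLinearMap (Matrix.toEuclideanLin M)

lemma clmOf_apply {n : ℕ} (M : Matrix (Fin n) (Fin n) ℂ) (u : EuclideanSpace ℂ (Fin n)) :
    clmOf M u = Matrix.toEuclideanLin M u := rfl

lemma l2OpNorm_clmOf {n : ℕ} (M : Matrix (Fin n) (Fin n) ℂ) :
    l2OpNorm M = ‖clmOf M‖ := rfl

lemma clmOf_sub {n : ℕ} (M N : Matrix (Fin n) (Fin n) ℂ) :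
    clmOf (M - N) = clmOf M - clmOf N := by
  ext u : 1
  simp [clmOf_apply, map_sub]

lemma clmOf_mul {n : ℕ} (M N : Matrix (Fin n) (Fin n) ℂ) :
    clmOf (M * N) = clmOf M * clmOf N := by
  ext u : 1
  simp only [ContinuousLinearMap.mul_apply, clmOf_apply, Matrix.toEuclideanLin_apply,
    Equiv.apply_symm_apply, ← Matrix.mulVec_mulVec]

lemma diag_apply {n : ℕ} (b : OrthonormalBasis (Fin n) ℂ (EuclideanSpace ℂ (Fin n)))
    (T : EuclideanSpace ℂ (Fin n) →L[ℂ] EuclideanSpace ℂ (Fin n)) (μ : Fin n → ℝ)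
    (hT : ∀ j, T (b j) = (μ j : ℂ) • b j) (u : EuclideanSpace ℂ (Fin n)) :
    T u = ∑ j, (b.repr u j * (μ j : ℂ)) • b j := by
  conv_lhs => rw [← b.sum_repr u]
  rw [map_sum]
  refine Finset.sum_congr rfl fun j _ => ?_
  rw [_root_.map_smul, hT j, smul_smul]

lemma normsq_eq_sum {n : ℕ} (b : OrthonormalBasis (Fin n) ℂ (EuclideanSpace ℂ (Fin n)))
    (u : EuclideanSpace ℂ (Fin n)) : ‖u‖ ^ 2 = ∑ j, ‖b.repr u j‖ ^ 2 := by
  rw [← b.repr.norm_map u, EuclideanSpace.norm_eq, Real.sq_sqrt]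
  exact Finset.sum_nonneg fun j _ => sq_nonneg _

lemma diag_form_lb {n : ℕ} (b : OrthonormalBasis (Fin n) ℂ (EuclideanSpace ℂ (Fin n)))
    (T : EuclideanSpace ℂ (Fin n) →L[ℂ] EuclideanSpace ℂ (Fin n)) (μ : Fin n → ℝ)
    (hT : ∀ j, T (b j) = (μ j : ℂ) • b j) {c : ℝ} (hc : ∀ j, c ≤ μ j)
    (u : EuclideanSpace ℂ (Fin n)) : c * ‖u‖ ^ 2 ≤ (inner ℂ u (T u) : ℂ).re := by
  have h1 : (inner ℂ u (T u) : ℂ) = ∑ j, ((μ j * ‖b.repr u j‖ ^ 2 : ℝ) : ℂ) := by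
    rw [diag_apply b T μ hT u, inner_sum]
    refine Finset.sum_congr rfl fun j _ => ?_
    rw [inner_smul_right, ← inner_conj_symm u (b j), ← b.repr_apply_apply,
      mul_comm (b.repr u j) ((μ j : ℂ)), mul_assoc, Complex.mul_conj']
    norm_cast
  rw [h1, Complex.re_sum, normsq_eq_sum b u, Finset.mul_sum]
  refine Finset.sum_le_sum fun j _ => ?_
  rw [Complex.ofReal_re]
  exact mul_le_mul_of_nonneg_right (hc j) (sq_nonneg _)

lemma diag_opnorm_le {n : ℕ} (b : OrthonormalBasis (Fin n) ℂ (EuclideanSpace ℂ (Fin n)))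
    (T : EuclideanSpace ℂ (Fin n) →L[ℂ] EuclideanSpace ℂ (Fin n)) (μ : Fin n → ℝ)
    (hT : ∀ j, T (b j) = (μ j : ℂ) • b j) {m : ℝ} (hm : 0 ≤ m)
    (hμ : ∀ j, |μ j| ≤ m) : ‖T‖ ≤ m := by
  refine T.opNorm_le_bound hm fun u => ?_
  have hrepr : ∀ j, b.repr (T u) j = b.repr u j * (μ j : ℂ) := by
    intro j
    rw [b.repr_apply_apply, diag_apply b T μ hT u, inner_sum]
    simp [inner_smul_right, orthonormal_iff_ite.mp b.orthonormal, b.repr_apply_apply]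
  have h1 : ‖T u‖ ^ 2 = ∑ j, ‖b.repr u j‖ ^ 2 * (μ j) ^ 2 := by
    rw [normsq_eq_sum b (T u)]
    refine Finset.sum_congr rfl fun j _ => ?_
    rw [hrepr j, norm_mul, mul_pow, Complex.norm_real, Real.norm_eq_abs, sq_abs]
  have h2 : ‖T u‖ ^ 2 ≤ (m * ‖u‖) ^ 2 := by
    rw [h1, mul_pow, normsq_eq_sum b u, Finset.mul_sum]
    refine Finset.sum_le_sum fun j _ => ?_
    rw [mul_comm (m ^ 2)]
    refine mul_le_mul_of_nonneg_left ?_ (sq_nonneg _)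
    calc (μ j) ^ 2 = |μ j| ^ 2 := (sq_abs _).symm
    _ ≤ m ^ 2 := by exact pow_le_pow_left₀ (abs_nonneg _) (hμ j) 2
  nlinarith [norm_nonneg (T u), mul_nonneg hm (norm_nonneg u)]

/-- Key lemma: if the quadratic forms of `S` and `T` are bounded below by `α`, `β`, and `S - T`
is symmetric, then `‖S - T‖ ≤ ‖S² - T²‖ / (α + β)`. -/
lemma sqrt_lipschitz {n : ℕ} (S T : EuclideanSpace ℂ (Fin n) →L[ℂ] EuclideanSpace ℂ (Fin n))
    {α β : ℝ} (hαβ : 0 < α + β)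
    (hD : ∀ x y : EuclideanSpace ℂ (Fin n), (inner ℂ ((S - T) x) y : ℂ) = inner ℂ x ((S - T) y))
    (hS : ∀ u, α * ‖u‖ ^ 2 ≤ (inner ℂ u (S u) : ℂ).re)
    (hT : ∀ u, β * ‖u‖ ^ 2 ≤ (inner ℂ u (T u) : ℂ).re) :
    ‖S - T‖ ≤ ‖S * S - T * T‖ / (α + β) := by
  set M := S * S - T * T with hMdef
  have hsym : (↑(S - T) : EuclideanSpace ℂ (Fin n) →ₗ[ℂ] EuclideanSpace ℂ (Fin n)).IsSymmetric :=
    fun x y => hD x y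
  set b := hsym.eigenvectorBasis finrank_euclideanSpace_fin with hb
  set μ := hsym.eigenvalues finrank_euclideanSpace_fin with hμ
  have happ : ∀ j, (S - T) (b j) = (μ j : ℂ) • b j := fun j =>
    hsym.apply_eigenvectorBasis finrank_euclideanSpace_fin j
  have hbound : ∀ j, |μ j| * (α + β) ≤ ‖M‖ := by
    intro j
    set v := b j with hv
    have hv1 : ‖v‖ = 1 := b.orthonormal.1 j
    have hMv : M v = S ((S - T) v) + (S - T) (T v) := by
      simp only [hMdef, ContinuousLinearMap.sub_apply, ContinuousLinearMap.mul_apply, map_sub]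
      abel
    have hinner : (inner ℂ v (M v) : ℂ) = (μ j : ℂ) * (inner ℂ v (S v) + inner ℂ v (T v)) := by
      rw [hMv, inner_add_right]
      have e1 : (inner ℂ v (S ((S - T) v)) : ℂ) = (μ j : ℂ) * inner ℂ v (S v) := by
        rw [happ j, _root_.map_smul, inner_smul_right]
      have e2 : (inner ℂ v ((S - T) (T v)) : ℂ) = (μ j : ℂ) * inner ℂ v (T v) := by
        rw [← hD v (T v), happ j, inner_smul_left, Complex.conj_ofReal]
      rw [e1, e2, mul_add]
    have hre : ((inner ℂ v (M v) : ℂ)).re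
        = μ j * ((inner ℂ v (S v) : ℂ).re + (inner ℂ v (T v) : ℂ).re) := by
      rw [hinner]
      simp [Complex.mul_re, Complex.add_re]
    have habs : |((inner ℂ v (M v) : ℂ)).re| ≤ ‖M‖ := by
      calc |((inner ℂ v (M v) : ℂ)).re| ≤ ‖(inner ℂ v (M v) : ℂ)‖ := Complex.abs_re_le_norm _
      _ ≤ ‖v‖ * ‖M v‖ := norm_inner_le_norm _ _
      _ ≤ ‖v‖ * (‖M‖ * ‖v‖) := by
          exact mul_le_mul_of_nonneg_left (M.le_opNorm v) (norm_nonneg _)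
      _ = ‖M‖ := by rw [hv1]; ring
    have hsum : α + β ≤ (inner ℂ v (S v) : ℂ).re + (inner ℂ v (T v) : ℂ).re := by
      have h1 := hS v; have h2 := hT v
      rw [hv1] at h1 h2
      linarith
    have hsumnn : 0 ≤ (inner ℂ v (S v) : ℂ).re + (inner ℂ v (T v) : ℂ).re := le_trans hαβ.le hsum
    calc |μ j| * (α + β) ≤ |μ j| * ((inner ℂ v (S v) : ℂ).re + (inner ℂ v (T v) : ℂ).re) :=
        mul_le_mul_of_nonneg_left hsum (abs_nonneg _)
    _ = |μ j * ((inner ℂ v (S v) : ℂ).re + (inner ℂ v (T v) : ℂ).re)| := by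
        rw [abs_mul, abs_of_nonneg hsumnn]
    _ = |((inner ℂ v (M v) : ℂ)).re| := by rw [hre]
    _ ≤ ‖M‖ := habs
  refine diag_opnorm_le b (S - T) μ happ (div_nonneg (norm_nonneg _) hαβ.le) fun j => ?_
  rw [le_div_iff₀ hαβ]
  exact hbound j

lemma hcfc_mul {n : ℕ} {A : Matrix (Fin n) (Fin n) ℂ} (hA : A.IsHermitian) (f g : ℝ → ℝ) :
    hA.cfc f * hA.cfc g = hA.cfc (fun x => f x * g x) := by
  have key : ∀ {a b c d e f : Matrix (Fin n) (Fin n) ℂ},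
      a * b * c * (d * e * f) = a * (b * (c * d) * e) * f := by
    intros; simp only [mul_assoc]
  rw [Matrix.IsHermitian.cfc, Matrix.IsHermitian.cfc, Matrix.IsHermitian.cfc,
    Unitary.conjStarAlgAut_apply, Unitary.conjStarAlgAut_apply, Unitary.conjStarAlgAut_apply, key,
    Unitary.coe_star_mul_self, mul_one, Matrix.diagonal_mul_diagonal]
  congr! with i
  simp

lemma hcfc_congr {n : ℕ} {A : Matrix (Fin n) (Fin n) ℂ} (hA : A.IsHermitian) {f g : ℝ → ℝ}
    (h : ∀ i, f (hA.eigenvalues i) = g (hA.eigenvalues i)) : hA.cfc f = hA.cfc g := by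
  rw [Matrix.IsHermitian.cfc, Matrix.IsHermitian.cfc]
  have : (RCLike.ofReal ∘ f ∘ hA.eigenvalues : Fin n → ℂ)
      = RCLike.ofReal ∘ g ∘ hA.eigenvalues := by
    funext i; simp [Function.comp_apply, h i]
  rw [this]

lemma hcfc_id {n : ℕ} {A : Matrix (Fin n) (Fin n) ℂ} (hA : A.IsHermitian) :
    hA.cfc (fun x => x) = A := by
  rw [Matrix.IsHermitian.cfc]
  exact hA.spectral_theorem.symm

lemma hcfc_isHermitian {n : ℕ} {A : Matrix (Fin n) (Fin n) ℂ} (hA : A.IsHermitian) (f : ℝ → ℝ) :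
    (hA.cfc f).IsHermitian := by
  unfold Matrix.IsHermitian
  rw [Matrix.IsHermitian.cfc, Unitary.conjStarAlgAut_apply, ← Matrix.star_eq_conjTranspose]
  simp only [star_mul, star_star, mul_assoc]
  congr 1
  · rw [Matrix.star_eq_conjTranspose, Matrix.diagonal_conjTranspose]
    congr! with i
    simp [Pi.star_def, Function.comp_def]

lemma clmOf_cfc_apply {n : ℕ} {A : Matrix (Fin n) (Fin n) ℂ} (hA : A.IsHermitian)
    (f : ℝ → ℝ) (j : Fin n) :
    clmOf (hA.cfc f) (hA.eigenvectorBasis j) =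
      ((f (hA.eigenvalues j) : ℝ) : ℂ) • hA.eigenvectorBasis j := by
  have hmv : (hA.cfc f).mulVec ⇑(hA.eigenvectorBasis j) =
      ((f (hA.eigenvalues j) : ℝ) : ℂ) • ⇑(hA.eigenvectorBasis j) := by
    rw [Matrix.IsHermitian.cfc, Unitary.conjStarAlgAut_apply, ← Matrix.mulVec_mulVec, ← Matrix.mulVec_mulVec,
      hA.star_eigenvectorUnitary_mulVec, Matrix.diagonal_mulVec_single]
    have : (Pi.single j ((RCLike.ofReal ∘ f ∘ hA.eigenvalues) j * 1) : Fin n → ℂ)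
        = ((f (hA.eigenvalues j) : ℝ) : ℂ) • (Pi.single j 1 : Fin n → ℂ) := by
      funext i
      simp only [Pi.smul_apply, Pi.single_apply, Function.comp_apply, mul_one, smul_eq_mul]
      split_ifs <;> simp
    rw [this, Matrix.mulVec_smul, hA.eigenvectorUnitary_mulVec]
  show Matrix.toEuclideanLin _ _ = _
  rw [Matrix.toEuclideanLin_apply]
  have : (WithLp.equiv 2 (Fin n → ℂ)) (hA.eigenvectorBasis j) = ⇑(hA.eigenvectorBasis j) := rfl
  rw [hmv]
  rfl

lemma inner_clmOf {n : ℕ} (M : Matrix (Fin n) (Fin n) ℂ) (u : EuclideanSpace ℂ (Fin n)) :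
    (inner ℂ u (clmOf M u) : ℂ) =
      dotProduct (star ((WithLp.equiv 2 (Fin n → ℂ)) u))
        (M.mulVec ((WithLp.equiv 2 (Fin n → ℂ)) u)) := by
  rw [EuclideanSpace.inner_eq_star_dotProduct, dotProduct_comm]; rfl

lemma eig_lb {n : ℕ} {A : Matrix (Fin n) (Fin n) ℂ} (hA : A.IsHermitian) {c : ℝ}
    (h : ∀ u : EuclideanSpace ℂ (Fin n), c * ‖u‖ ^ 2 ≤ (inner ℂ u (clmOf A u) : ℂ).re)
    (i : Fin n) : c ≤ hA.eigenvalues i := by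
  have h1 := hA.eigenvalues_eq i
  have h2 := h (hA.eigenvectorBasis i)
  have h3 : ‖hA.eigenvectorBasis i‖ = 1 := hA.eigenvectorBasis.orthonormal.1 i
  rw [h3] at h2
  rw [inner_clmOf] at h2
  have h4 : (WithLp.equiv 2 (Fin n → ℂ)) (hA.eigenvectorBasis i) = ⇑(hA.eigenvectorBasis i) := rfl
  rw [h4] at h2
  rw [h1]
  simpa using h2

lemma posdef_of_lb {n : ℕ} {A : Matrix (Fin n) (Fin n) ℂ} (hB : A.IsHermitian) {c : ℝ}
    (hc : 0 < c)
    (h : ∀ u : EuclideanSpace ℂ (Fin n), c * ‖u‖ ^ 2 ≤ (inner ℂ u (clmOf A u) : ℂ).re) :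
    A.PosDef := by
  refine Matrix.posDef_iff_dotProduct_mulVec.mpr ⟨hB, fun x hx => ?_⟩
  set u : EuclideanSpace ℂ (Fin n) := (WithLp.equiv 2 (Fin n → ℂ)).symm x with hu
  have hz : (inner ℂ u (clmOf A u) : ℂ) = dotProduct (star x) (A.mulVec x) := by
    rw [EuclideanSpace.inner_eq_star_dotProduct, dotProduct_comm]; rfl
  have hun : u ≠ 0 := fun h0 => hx (by simpa [hu] using congrArg (WithLp.equiv 2 (Fin n → ℂ)) h0)
  have hpos : 0 < (inner ℂ u (clmOf A u) : ℂ).re := by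
    have h5 : 0 < ‖u‖ := norm_pos_iff.mpr hun
    have h6 : 0 < c * ‖u‖ ^ 2 := mul_pos hc (pow_pos h5 2)
    linarith [h u]
  have him : (inner ℂ u (clmOf A u) : ℂ).im = 0 := by
    have hsym : (Matrix.toEuclideanLin A).IsSymmetric := (Matrix.isHermitian_iff_isSymmetric).mp hB
    have hconj : (starRingEnd ℂ) (inner ℂ u (clmOf A u) : ℂ) = (inner ℂ u (clmOf A u) : ℂ) := by
      rw [inner_conj_symm]
      exact hsym u u
    exact Complex.conj_eq_iff_im.mp hconj
  rw [← hz] at *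
  rw [Complex.lt_def]
  constructor
  · simpa using hpos
  · simpa using him.symm

lemma one_le_rpow' {x : ℝ} (hx : 1 ≤ x) {r : ℝ} (hr : 0 ≤ r) : 1 ≤ x ^ r := by
  calc (1 : ℝ) = 1 ^ r := (Real.one_rpow r).symm
  _ ≤ x ^ r := Real.rpow_le_rpow zero_le_one hx hr

/-- **Quarter-power perturbation bound.** If `A` is Hermitian with `A ≽ I` and `B` is
Hermitian with `‖A - B‖ ≤ 1/2` in the ℓ²-operator norm, then `B` is positive definite with
`B ≽ (1/2)I`, and `‖A^{1/4} - B^{1/4}‖ ≤ ‖A - B‖ / ((1 + 2^{-1/2})(1 + 2^{-1/4}))`. -/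
theorem quarter_power_perturbation_bound {n : ℕ}
    (A B : Matrix (Fin n) (Fin n) ℂ) (hA : A.IsHermitian) (hB : B.IsHermitian)
    (hAI : ∀ u : EuclideanSpace ℂ (Fin n),
      ‖u‖ ^ 2 ≤ ((inner ℂ u (Matrix.toEuclideanLin A u) : ℂ)).re)
    (hAB : l2OpNorm (A - B) ≤ 1/2) :
    B.PosDef ∧
    (∀ u : EuclideanSpace ℂ (Fin n),
      (1/2) * ‖u‖ ^ 2 ≤ ((inner ℂ u (Matrix.toEuclideanLin B u) : ℂ)).re) ∧
    l2OpNorm (herPow A hA (1/4) - herPow B hB (1/4)) ≤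
      l2OpNorm (A - B) / ((1 + (2:ℝ) ^ (-(1/2 : ℝ))) * (1 + (2:ℝ) ^ (-(1/4 : ℝ)))) := by
  have hAI' : ∀ u : EuclideanSpace ℂ (Fin n), ‖u‖ ^ 2 ≤ (inner ℂ u (clmOf A u) : ℂ).re := hAI
  -- Step 1: B has quadratic form bounded below by 1/2.
  have hBlb : ∀ u : EuclideanSpace ℂ (Fin n),
      (1/2) * ‖u‖ ^ 2 ≤ (inner ℂ u (clmOf B u) : ℂ).re := by
    intro u
    have hsub : (inner ℂ u (clmOf B u) : ℂ).re
        = (inner ℂ u (clmOf A u) : ℂ).re - (inner ℂ u (clmOf (A - B) u) : ℂ).re := by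
      rw [clmOf_sub]
      simp [inner_sub_right]
    have h2 : |(inner ℂ u (clmOf (A - B) u) : ℂ).re| ≤ (1/2) * ‖u‖ ^ 2 := by
      calc |(inner ℂ u (clmOf (A - B) u) : ℂ).re| ≤ ‖(inner ℂ u (clmOf (A - B) u) : ℂ)‖ :=
          Complex.abs_re_le_norm _
      _ ≤ ‖u‖ * ‖clmOf (A - B) u‖ := norm_inner_le_norm _ _
      _ ≤ ‖u‖ * (‖clmOf (A - B)‖ * ‖u‖) :=
          mul_le_mul_of_nonneg_left ((clmOf (A - B)).le_opNorm u) (norm_nonneg _)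
      _ ≤ ‖u‖ * ((1/2) * ‖u‖) := by
          refine mul_le_mul_of_nonneg_left ?_ (norm_nonneg _)
          exact mul_le_mul_of_nonneg_right hAB (norm_nonneg _)
      _ = (1/2) * ‖u‖ ^ 2 := by ring
    have habs := abs_le.mp h2
    have h1 := hAI' u
    linarith [hsub]
  refine ⟨posdef_of_lb hB (by norm_num) hBlb, fun u => hBlb u, ?_⟩
  -- eigenvalue bounds
  have hAeig : ∀ i, 1 ≤ hA.eigenvalues i :=
    eig_lb hA (fun u => by simpa using hAI' u)
  have hBeig : ∀ i, 1/2 ≤ hB.eigenvalues i := eig_lb hB hBlb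
  have hApos : ∀ i, (0:ℝ) < hA.eigenvalues i := fun i => lt_of_lt_of_le one_pos (hAeig i)
  have hBpos : ∀ i, (0:ℝ) < hB.eigenvalues i := fun i => lt_of_lt_of_le (by norm_num) (hBeig i)
  -- the four power matrices
  set S := hA.cfc (fun x : ℝ => x ^ ((1:ℝ)/2)) with hSdef
  set T := hB.cfc (fun x : ℝ => x ^ ((1:ℝ)/2)) with hTdef
  set P := hA.cfc (fun x : ℝ => x ^ ((1:ℝ)/4)) with hPdef
  set Q := hB.cfc (fun x : ℝ => x ^ ((1:ℝ)/4)) with hQdef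
  have hPherPow : herPow A hA (1/4) = P := rfl
  have hQherPow : herPow B hB (1/4) = Q := rfl
  -- multiplicative identities
  have hSS : S * S = A := by
    rw [hSdef, hcfc_mul]
    rw [hcfc_congr hA (g := fun x => x) (fun i => by
      rw [← Real.rpow_add (hApos i)]; norm_num)]
    exact hcfc_id hA
  have hTT : T * T = B := by
    rw [hTdef, hcfc_mul]
    rw [hcfc_congr hB (g := fun x => x) (fun i => by
      rw [← Real.rpow_add (hBpos i)]; norm_num)]
    exact hcfc_id hB
  have hPP : P * P = S := by
    rw [hPdef, hcfc_mul, hSdef]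
    exact hcfc_congr hA (fun i => by rw [← Real.rpow_add (hApos i)]; norm_num)
  have hQQ : Q * Q = T := by
    rw [hQdef, hcfc_mul, hTdef]
    exact hcfc_congr hB (fun i => by rw [← Real.rpow_add (hBpos i)]; norm_num)
  -- eigenvalue bounds for powers
  have halfpow : ∀ r : ℝ, 0 ≤ r → ((1:ℝ)/2) ^ r = (2:ℝ) ^ (-r) := by
    intro r hr
    rw [one_div, Real.inv_rpow (by norm_num), ← Real.rpow_neg (by norm_num)]
  -- quadratic form lower bounds for powers
  have hSform : ∀ u : EuclideanSpace ℂ (Fin n), 1 * ‖u‖ ^ 2 ≤ (inner ℂ u (clmOf S u) : ℂ).re := by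
    refine diag_form_lb hA.eigenvectorBasis (clmOf S) _
      (fun j => clmOf_cfc_apply hA _ j) (fun j => ?_)
    exact one_le_rpow' (hAeig j) (by norm_num)
  have hTform : ∀ u : EuclideanSpace ℂ (Fin n),
      (2:ℝ) ^ (-(1/2 : ℝ)) * ‖u‖ ^ 2 ≤ (inner ℂ u (clmOf T u) : ℂ).re := by
    refine diag_form_lb hB.eigenvectorBasis (clmOf T) _
      (fun j => clmOf_cfc_apply hB _ j) (fun j => ?_)
    rw [← halfpow (1/2) (by norm_num)]
    exact Real.rpow_le_rpow (by norm_num) (hBeig j) (by norm_num)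
  have hPform : ∀ u : EuclideanSpace ℂ (Fin n), 1 * ‖u‖ ^ 2 ≤ (inner ℂ u (clmOf P u) : ℂ).re := by
    refine diag_form_lb hA.eigenvectorBasis (clmOf P) _
      (fun j => clmOf_cfc_apply hA _ j) (fun j => ?_)
    exact one_le_rpow' (hAeig j) (by norm_num)
  have hQform : ∀ u : EuclideanSpace ℂ (Fin n),
      (2:ℝ) ^ (-(1/4 : ℝ)) * ‖u‖ ^ 2 ≤ (inner ℂ u (clmOf Q u) : ℂ).re := by
    refine diag_form_lb hB.eigenvectorBasis (clmOf Q) _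
      (fun j => clmOf_cfc_apply hB _ j) (fun j => ?_)
    rw [← halfpow (1/4) (by norm_num)]
    exact Real.rpow_le_rpow (by norm_num) (hBeig j) (by norm_num)
  -- symmetry of differences
  have hSTher : (S - T).IsHermitian := (hcfc_isHermitian hA _).sub (hcfc_isHermitian hB _)
  have hPQher : (P - Q).IsHermitian := (hcfc_isHermitian hA _).sub (hcfc_isHermitian hB _)
  have hsymST : ∀ x y : EuclideanSpace ℂ (Fin n),
      (inner ℂ ((clmOf S - clmOf T) x) y : ℂ) = inner ℂ x ((clmOf S - clmOf T) y) := by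
    intro x y
    rw [← clmOf_sub]
    exact (Matrix.isHermitian_iff_isSymmetric.mp hSTher) x y
  have hsymPQ : ∀ x y : EuclideanSpace ℂ (Fin n),
      (inner ℂ ((clmOf P - clmOf Q) x) y : ℂ) = inner ℂ x ((clmOf P - clmOf Q) y) := by
    intro x y
    rw [← clmOf_sub]
    exact (Matrix.isHermitian_iff_isSymmetric.mp hPQher) x y
  -- positivity of constants
  have hc2 : (0:ℝ) < 2 ^ (-(1/2 : ℝ)) := Real.rpow_pos_of_pos (by norm_num) _
  have hc4 : (0:ℝ) < 2 ^ (-(1/4 : ℝ)) := Real.rpow_pos_of_pos (by norm_num) _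
  -- first application
  have key1 : ‖clmOf S - clmOf T‖ ≤ l2OpNorm (A - B) / (1 + (2:ℝ) ^ (-(1/2 : ℝ))) := by
    have h := sqrt_lipschitz (clmOf S) (clmOf T) (by linarith) hsymST hSform hTform
    rw [← clmOf_mul, ← clmOf_mul, hSS, hTT] at h
    rw [l2OpNorm_clmOf, clmOf_sub]
    exact h
  -- second application
  have key2 : ‖clmOf P - clmOf Q‖ ≤ ‖clmOf S - clmOf T‖ / (1 + (2:ℝ) ^ (-(1/4 : ℝ))) := by
    have h := sqrt_lipschitz (clmOf P) (clmOf Q) (by linarith) hsymPQ hPform hQform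
    rw [← clmOf_mul, ← clmOf_mul, hPP, hQQ] at h
    exact h
  rw [hPherPow, hQherPow]
  calc l2OpNorm (P - Q) = ‖clmOf P - clmOf Q‖ := by rw [l2OpNorm_clmOf, clmOf_sub]
  _ ≤ ‖clmOf S - clmOf T‖ / (1 + (2:ℝ) ^ (-(1/4 : ℝ))) := key2
  _ ≤ (l2OpNorm (A - B) / (1 + (2:ℝ) ^ (-(1/2 : ℝ)))) / (1 + (2:ℝ) ^ (-(1/4 : ℝ))) := by
      gcongr
  _ = l2OpNorm (A - B) / ((1 + (2:ℝ) ^ (-(1/2 : ℝ))) * (1 + (2:ℝ) ^ (-(1/4 : ℝ)))) :=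
      div_div _ _ _
end

section
/- Let A be an n×n complex Hermitian positive definite matrix, let E be an n×n complex Hermitian matrix, let a, b ∈ ℝ and C ≥ 0, and assume |⟨u, E w⟩| ≤ C ‖A^a u‖ ‖A^b w‖ for all u, w ∈ ℂⁿ. Let D := ∫₀^∞ exp(−t A^{1/2}) E exp(−t A^{1/2}) dt and define F := −A^{−1/2} D A^{−1/2}. Then |⟨u, F w⟩| ≤ (C/2) ‖A^{a−3/4} u‖ ‖A^{b−3/4} w‖ for all u, w ∈ ℂⁿ. -/
open MeasureTheory
open scoped ComplexOrder

attribute [local instance] Matrix.normedAddCommGroup Matrix.normedSpace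

/-- The matrix exponential, defined by its power series `exp A = ∑ Aᵏ / k!`. -/
noncomputable def matExp {N : ℕ} (A : Matrix (Fin N) (Fin N) ℂ) : Matrix (Fin N) (Fin N) ℂ :=
  ∑' k : ℕ, ((k.factorial : ℂ)⁻¹) • A ^ k

namespace FracDerivAux

open Matrix Set

variable {n : ℕ} {A : Matrix (Fin n) (Fin n) ℂ}

/-- The eigenvector unitary of a Hermitian matrix, as a bare matrix. -/
noncomputable def Um (hH : A.IsHermitian) : Matrix (Fin n) (Fin n) ℂ :=
  (Matrix.IsHermitian.eigenvectorUnitary hH : Matrix (Fin n) (Fin n) ℂ)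

lemma hU1 (hH : A.IsHermitian) : Um hH * star (Um hH) = 1 :=
  Unitary.mul_star_self_of_mem (SetLike.coe_mem _)

lemma hU2 (hH : A.IsHermitian) : star (Um hH) * Um hH = 1 :=
  Unitary.star_mul_self_of_mem (SetLike.coe_mem _)

lemma cfc_def (hH : A.IsHermitian) (f : ℝ → ℝ) :
    hH.cfc f = Um hH * Matrix.diagonal (fun i => ((f (hH.eigenvalues i) : ℝ) : ℂ))
      * star (Um hH) := rfl

lemma cfc_mul (hH : A.IsHermitian) (f g : ℝ → ℝ) :
    hH.cfc f * hH.cfc g = hH.cfc (fun x => f x * g x) := by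
  rw [cfc_def, cfc_def, cfc_def]
  have h : ∀ (a b c d e f : Matrix (Fin n) (Fin n) ℂ),
      (a * b * c) * (d * e * f) = a * (b * (c * d) * e) * f := by
    intros; simp only [mul_assoc]
  rw [h, hU2, mul_one, diagonal_mul_diagonal]
  congr 2
  ext i
  push_cast
  ring

lemma cfc_herm (hH : A.IsHermitian) (f : ℝ → ℝ) : (hH.cfc f)ᴴ = hH.cfc f := by
  have hD : star (Matrix.diagonal (fun i => ((f (hH.eigenvalues i) : ℝ) : ℂ)))
      = Matrix.diagonal (fun i => ((f (hH.eigenvalues i) : ℝ) : ℂ)) := by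
    ext i j
    by_cases h : i = j
    · simp [Matrix.star_apply, Matrix.diagonal_apply, h]
    · simp only [Matrix.star_apply, Matrix.diagonal_apply, h, if_false]
      rw [if_neg (fun hji => h hji.symm)]
      simp
  rw [cfc_def, ← star_eq_conjTranspose]
  simp only [Matrix.star_mul, star_star, hD, mul_assoc]

lemma cfc_congr (hH : A.IsHermitian) {f g : ℝ → ℝ}
    (h : ∀ i, f (hH.eigenvalues i) = g (hH.eigenvalues i)) : hH.cfc f = hH.cfc g := by
  have : (fun i => ((f (hH.eigenvalues i) : ℝ) : ℂ)) = fun i => ((g (hH.eigenvalues i) : ℝ) : ℂ) :=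
    funext fun i => by rw [h i]
  rw [cfc_def, cfc_def, this]

lemma inner_eq_dot (M : Matrix (Fin n) (Fin n) ℂ) (u w : EuclideanSpace ℂ (Fin n)) :
    (inner ℂ u (Matrix.toEuclideanLin M w) : ℂ)
      = dotProduct (star (u : Fin n → ℂ)) (M.mulVec (w : Fin n → ℂ)) := by
  simp [PiLp.inner_apply, dotProduct, RCLike.inner_apply, Matrix.mulVec]
  exact Finset.sum_congr rfl fun _ _ => mul_comm _ _

lemma toEuclideanLin_coe (M : Matrix (Fin n) (Fin n) ℂ) (w : EuclideanSpace ℂ (Fin n)) :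
    (Matrix.toEuclideanLin M w : Fin n → ℂ) = M.mulVec (w : Fin n → ℂ) := rfl

lemma sandwich (P M Q : Matrix (Fin n) (Fin n) ℂ) (hP : Pᴴ = P) (u w : Fin n → ℂ) :
    dotProduct (star u) ((P * M * Q).mulVec w)
      = dotProduct (star (P.mulVec u)) (M.mulVec (Q.mulVec w)) := by
  simp only [← Matrix.mulVec_mulVec, Matrix.dotProduct_mulVec, star_mulVec, hP]

lemma dot_self (y : Fin n → ℂ) :
    dotProduct (star y) y = ((∑ i, ‖y i‖ ^ 2 : ℝ) : ℂ) := by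
  rw [Complex.ofReal_sum]
  refine Finset.sum_congr rfl fun i _ => ?_
  rw [Pi.star_apply, Complex.star_def, mul_comm, Complex.mul_conj']
  push_cast
  ring

lemma sum_sq_mulVec_unitary (hH : A.IsHermitian) (v : Fin n → ℂ) :
    ∑ i, ‖((Um hH).mulVec v) i‖ ^ 2 = ∑ i, ‖v i‖ ^ 2 := by
  have h : dotProduct (star ((Um hH).mulVec v)) ((Um hH).mulVec v)
      = dotProduct (star v) v := by
    rw [star_mulVec, Matrix.dotProduct_mulVec, Matrix.vecMul_vecMul,
      ← star_eq_conjTranspose, hU2 hH, Matrix.vecMul_one]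
  rw [dot_self, dot_self] at h
  exact_mod_cast h

lemma norm_eucl_sq (y : EuclideanSpace ℂ (Fin n)) : ‖y‖ ^ 2 = ∑ i, ‖y i‖ ^ 2 := by
  rw [EuclideanSpace.norm_eq, Real.sq_sqrt]
  positivity

lemma norm_cfc_sq (hH : A.IsHermitian) (f : ℝ → ℝ) (x : EuclideanSpace ℂ (Fin n)) :
    ‖Matrix.toEuclideanLin (hH.cfc f) x‖ ^ 2
      = ∑ i, (f (hH.eigenvalues i)) ^ 2 * ‖((star (Um hH)).mulVec (x : Fin n → ℂ)) i‖ ^ 2 := by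
  rw [norm_eucl_sq]
  have hy : ∀ i, (Matrix.toEuclideanLin (hH.cfc f) x : Fin n → ℂ) i
      = ((Um hH).mulVec ((Matrix.diagonal (fun i => ((f (hH.eigenvalues i) : ℝ) : ℂ))).mulVec
          ((star (Um hH)).mulVec (x : Fin n → ℂ)))) i := by
    intro i
    have h0 : (Matrix.toEuclideanLin (hH.cfc f) x : Fin n → ℂ)
        = (hH.cfc f).mulVec (x : Fin n → ℂ) := rfl
    rw [h0, cfc_def, ← Matrix.mulVec_mulVec, ← Matrix.mulVec_mulVec]
  calc ∑ i, ‖(Matrix.toEuclideanLin (hH.cfc f) x) i‖ ^ 2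
      = ∑ i, ‖((Um hH).mulVec ((Matrix.diagonal (fun i => ((f (hH.eigenvalues i) : ℝ) : ℂ))).mulVec
          ((star (Um hH)).mulVec (x : Fin n → ℂ)))) i‖ ^ 2 :=
        Finset.sum_congr rfl fun i _ => by rw [hy i]
    _ = ∑ i, ‖((Matrix.diagonal (fun i => ((f (hH.eigenvalues i) : ℝ) : ℂ))).mulVec
          ((star (Um hH)).mulVec (x : Fin n → ℂ))) i‖ ^ 2 := sum_sq_mulVec_unitary hH _
    _ = ∑ i, (f (hH.eigenvalues i)) ^ 2 * ‖((star (Um hH)).mulVec (x : Fin n → ℂ)) i‖ ^ 2 := by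
        refine Finset.sum_congr rfl fun i _ => ?_
        rw [Matrix.mulVec_diagonal, norm_mul, mul_pow, Complex.norm_real,
          Real.norm_eq_abs, sq_abs]

lemma toEuclideanLin_comp (M N : Matrix (Fin n) (Fin n) ℂ) (x : EuclideanSpace ℂ (Fin n)) :
    Matrix.toEuclideanLin M (Matrix.toEuclideanLin N x) = Matrix.toEuclideanLin (M * N) x := by
  have h : M.mulVec (N.mulVec (x : Fin n → ℂ)) = (M * N).mulVec (x : Fin n → ℂ) :=
    Matrix.mulVec_mulVec _ _ _
  ext i
  exact congrFun h i

lemma matExp_eq_exp (M : Matrix (Fin n) (Fin n) ℂ) : matExp M = NormedSpace.exp M := by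
  rw [NormedSpace.exp_eq_tsum (𝕂 := ℂ), matExp]

lemma matExp_cfc (hH : A.IsHermitian) (f : ℝ → ℝ) (t : ℝ) :
    matExp ((-t) • hH.cfc f) = hH.cfc (fun x => Real.exp (-t * f x)) := by
  have hUu : IsUnit (Um hH) :=
    ⟨⟨Um hH, star (Um hH), hU1 hH, hU2 hH⟩, rfl⟩
  have hUinv : (Um hH)⁻¹ = star (Um hH) := Matrix.inv_eq_right_inv (hU1 hH)
  have hv1 : ((-t) • fun i => ((f (hH.eigenvalues i) : ℝ) : ℂ))
      = fun i => ((-t * f (hH.eigenvalues i) : ℝ) : ℂ) := by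
    funext i
    simp [Complex.real_smul]
  have h1 : (-t) • hH.cfc f
      = Um hH * Matrix.diagonal (fun i => ((-t * f (hH.eigenvalues i) : ℝ) : ℂ)) * star (Um hH) := by
    rw [cfc_def, ← smul_mul_assoc, ← mul_smul_comm, ← Matrix.diagonal_smul, hv1]
  have hv2 : (NormedSpace.exp fun i => ((-t * f (hH.eigenvalues i) : ℝ) : ℂ))
      = fun i => ((Real.exp (-t * f (hH.eigenvalues i)) : ℝ) : ℂ) := by
    funext i
    rw [Pi.coe_exp, ← Complex.exp_eq_exp_ℂ, ← Complex.ofReal_exp]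
  rw [matExp_eq_exp, h1, ← hUinv, Matrix.exp_conj _ _ hUu, Matrix.exp_diagonal, hv2, hUinv,
    cfc_def]

/-- The rank-style building blocks of the conjugated matrix. -/
noncomputable def Bm (hH : A.IsHermitian) (E : Matrix (Fin n) (Fin n) ℂ) (i j : Fin n) :
    Matrix (Fin n) (Fin n) ℂ :=
  Matrix.of fun p q => Um hH p i * ((star (Um hH) * E * Um hH) i j) * star (Um hH) j q

lemma triple_apply (Uc X V : Matrix (Fin n) (Fin n) ℂ) (p q : Fin n) :
    (Uc * X * V) p q = ∑ i, ∑ j, Uc p i * X i j * V j q := by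
  rw [Matrix.mul_apply]
  simp_rw [Matrix.mul_apply, Finset.sum_mul]
  exact Finset.sum_comm

lemma decomp (hH : A.IsHermitian) (E : Matrix (Fin n) (Fin n) ℂ) (d : ℝ → ℝ) :
    hH.cfc d * E * hH.cfc d
      = ∑ i, ∑ j, (d (hH.eigenvalues i) * d (hH.eigenvalues j)) • Bm hH E i j := by
  have hX : hH.cfc d * E * hH.cfc d
      = Um hH * (Matrix.diagonal (fun i => ((d (hH.eigenvalues i) : ℝ) : ℂ))
          * (star (Um hH) * E * Um hH)
          * Matrix.diagonal (fun i => ((d (hH.eigenvalues i) : ℝ) : ℂ))) * star (Um hH) := by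
    rw [cfc_def]
    simp only [Matrix.mul_assoc]
  ext p q
  rw [hX, triple_apply]
  simp only [Matrix.sum_apply, Matrix.smul_apply, Bm, Matrix.of_apply,
    Matrix.diagonal_mul, Matrix.mul_diagonal, Complex.real_smul]
  refine Finset.sum_congr rfl fun i _ => Finset.sum_congr rfl fun j _ => ?_
  push_cast
  ring

lemma integral_exp_neg_mul {c : ℝ} (hc : 0 < c) :
    ∫ t in Ioi (0 : ℝ), Real.exp (-c * t) = 1 / c := by
  have h := integral_comp_mul_left_Ioi (fun x => Real.exp (-x)) 0 hc
  simp only [mul_zero] at h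
  have h2 : (fun t : ℝ => Real.exp (-c * t)) = fun t : ℝ => Real.exp (-(c * t)) := by
    funext t; ring_nf
  rw [h2, h, integral_exp_neg_Ioi, neg_zero, Real.exp_zero, smul_eq_mul, mul_one, one_div]

lemma intOn_exp {c : ℝ} (hc : 0 < c) :
    IntegrableOn (fun t : ℝ => Real.exp (-c * t)) (Ioi (0:ℝ)) :=
  exp_neg_integrableOn_Ioi 0 hc

/-- The bilinear functional `M ↦ ⟨u, M w⟩` as a continuous linear map on matrices. -/
noncomputable def Lmap (u w : Fin n → ℂ) : Matrix (Fin n) (Fin n) ℂ →L[ℂ] ℂ :=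
  LinearMap.toContinuousLinearMap
    { toFun := fun M => dotProduct (star u) (M.mulVec w)
      map_add' := by
        intro M N
        rw [Matrix.add_mulVec, dotProduct_add]
      map_smul' := by
        intro r M
        rw [RingHom.id_apply, Matrix.smul_mulVec, dotProduct_smul, smul_eq_mul] }

lemma Lmap_apply (u w : Fin n → ℂ) (M : Matrix (Fin n) (Fin n) ℂ) :
    Lmap u w M = dotProduct (star u) (M.mulVec w) := rfl

lemma hoelder_sqrt (S T : ℝ → ℝ) (hS : ∀ t, 0 ≤ S t) (hT : ∀ t, 0 ≤ T t)
    (hSc : Continuous S) (hTc : Continuous T)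
    (hSi : IntegrableOn S (Ioi (0:ℝ))) (hTi : IntegrableOn T (Ioi (0:ℝ))) :
    ∫ t in Ioi (0:ℝ), Real.sqrt (S t) * Real.sqrt (T t)
      ≤ Real.sqrt (∫ t in Ioi (0:ℝ), S t) * Real.sqrt (∫ t in Ioi (0:ℝ), T t) := by
  have h2 : Real.HolderConjugate 2 2 := Real.HolderConjugate.two_two
  have hmem : ∀ (S : ℝ → ℝ), (∀ t, 0 ≤ S t) → Continuous S → IntegrableOn S (Ioi (0:ℝ)) →
      MemLp (fun t => Real.sqrt (S t)) (ENNReal.ofReal 2) (volume.restrict (Ioi (0:ℝ))) := by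
    intro S hS hSc hSi
    rw [show ENNReal.ofReal 2 = 2 by norm_num]
    refine (memLp_two_iff_integrable_sq
      ((Real.continuous_sqrt.comp hSc).aestronglyMeasurable)).2 ?_
    have h3 : (fun t => ((fun x => Real.sqrt x) ∘ S) t ^ 2) = S :=
      funext fun t => Real.sq_sqrt (hS t)
    rw [h3]
    exact hSi
  have h := MeasureTheory.integral_mul_le_Lp_mul_Lq_of_nonneg h2
    (Filter.Eventually.of_forall fun t => Real.sqrt_nonneg (S t))
    (Filter.Eventually.of_forall fun t => Real.sqrt_nonneg (T t))
    (hmem S hS hSc hSi) (hmem T hT hTc hTi)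
  have hsq : ∀ (S : ℝ → ℝ), (∀ t, 0 ≤ S t) →
      (fun t => Real.sqrt (S t) ^ (2:ℝ)) = S := by
    intro S hS
    funext t
    rw [show (2:ℝ) = ((2:ℕ):ℝ) by norm_num, Real.rpow_natCast, Real.sq_sqrt (hS t)]
  rw [hsq S hS, hsq T hT] at h
  calc ∫ t in Ioi (0:ℝ), Real.sqrt (S t) * Real.sqrt (T t)
      ≤ (∫ t in Ioi (0:ℝ), S t) ^ ((1:ℝ)/2) * (∫ t in Ioi (0:ℝ), T t) ^ ((1:ℝ)/2) := h
    _ = _ := by rw [Real.sqrt_eq_rpow, Real.sqrt_eq_rpow]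

/-- square of the weighted exponential norm as a function of `t` -/
noncomputable def Sfun (hH : A.IsHermitian) (r : ℝ) (x : EuclideanSpace ℂ (Fin n)) (t : ℝ) : ℝ :=
  ∑ i, (hH.eigenvalues i ^ r) ^ 2 * ‖((star (Um hH)).mulVec (x : Fin n → ℂ)) i‖ ^ 2
      * Real.exp (-(2 * hH.eigenvalues i ^ ((1:ℝ)/2)) * t)

lemma Sfun_nonneg (hH : A.IsHermitian) (r : ℝ) (x : EuclideanSpace ℂ (Fin n)) (t : ℝ) :
    0 ≤ Sfun hH r x t :=
  Finset.sum_nonneg fun i _ => by positivity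

lemma Sfun_cont (hH : A.IsHermitian) (r : ℝ) (x : EuclideanSpace ℂ (Fin n)) :
    Continuous (Sfun hH r x) := by
  refine continuous_finset_sum _ fun i _ => ?_
  fun_prop

lemma Sfun_integrableOn (hH : A.IsHermitian) (hm : ∀ i, 0 < hH.eigenvalues i) (r : ℝ)
    (x : EuclideanSpace ℂ (Fin n)) : IntegrableOn (Sfun hH r x) (Ioi (0:ℝ)) := by
  refine MeasureTheory.integrable_finset_sum _ fun i _ => ?_
  exact (intOn_exp (by
    have := Real.rpow_pos_of_pos (hm i) ((1:ℝ)/2)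
    positivity)).const_mul _

lemma norm_cfc_sqrt (hH : A.IsHermitian) (r : ℝ) (x : EuclideanSpace ℂ (Fin n)) (t : ℝ) :
    ‖Matrix.toEuclideanLin (hH.cfc fun y => y ^ r * Real.exp (-t * y ^ ((1:ℝ)/2))) x‖
      = Real.sqrt (Sfun hH r x t) := by
  rw [← Real.sqrt_sq (norm_nonneg (Matrix.toEuclideanLin
    (hH.cfc fun y => y ^ r * Real.exp (-t * y ^ ((1:ℝ)/2))) x)), norm_cfc_sq]
  congr 1
  refine Finset.sum_congr rfl fun i _ => ?_
  rw [mul_pow, show Real.exp (-t * hH.eigenvalues i ^ ((1:ℝ)/2)) ^ 2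
      = Real.exp (-(2 * hH.eigenvalues i ^ ((1:ℝ)/2)) * t) from by
    rw [sq, ← Real.exp_add]; congr 1; ring]
  ring

lemma integral_Sfun (hH : A.IsHermitian) (hm : ∀ i, 0 < hH.eigenvalues i) (r : ℝ)
    (x : EuclideanSpace ℂ (Fin n)) :
    ∫ t in Ioi (0:ℝ), Sfun hH r x t
      = ‖Matrix.toEuclideanLin (hH.cfc fun y => y ^ (r - 1/4)) x‖ ^ 2 / 2 := by
  rw [norm_cfc_sq]
  unfold Sfun
  rw [MeasureTheory.integral_finset_sum _ (fun i _ => (intOn_exp (by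
    have := Real.rpow_pos_of_pos (hm i) ((1:ℝ)/2)
    positivity)).const_mul _), Finset.sum_div]
  refine Finset.sum_congr rfl fun i _ => ?_
  rw [MeasureTheory.integral_const_mul, integral_exp_neg_mul (by
    have := Real.rpow_pos_of_pos (hm i) ((1:ℝ)/2)
    positivity)]
  have h1 : (hH.eigenvalues i ^ r : ℝ) ^ 2 = hH.eigenvalues i ^ (2*r) := by
    rw [sq, ← Real.rpow_add (hm i)]; congr 1; ring
  have h2 : (hH.eigenvalues i ^ (r - 1/4) : ℝ) ^ 2 = hH.eigenvalues i ^ (2*r - 1/2) := by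
    rw [sq, ← Real.rpow_add (hm i)]; congr 1; ring
  have h3 : (hH.eigenvalues i : ℝ) ^ (2*r) = hH.eigenvalues i ^ (2*r - 1/2)
      * hH.eigenvalues i ^ ((1:ℝ)/2) := by
    rw [← Real.rpow_add (hm i)]; congr 1; ring
  have hne : (hH.eigenvalues i ^ ((1:ℝ)/2) : ℝ) ≠ 0 :=
    ne_of_gt (Real.rpow_pos_of_pos (hm i) _)
  rw [h1, h2, h3]
  field_simp

noncomputable instance matENormed {m : ℕ} : ENormedAddCommMonoid (Matrix (Fin m) (Fin m) ℂ) :=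
  NormedAddCommGroup.toENormedAddCommMonoid

instance matPMS {m : ℕ} : TopologicalSpace.PseudoMetrizableSpace (Matrix (Fin m) (Fin m) ℂ) :=
  inferInstanceAs (TopologicalSpace.PseudoMetrizableSpace (Fin m → Fin m → ℂ))

end FracDerivAux

/-- **Fractional-order derivative trick (order -1/2).**
Let `A` be Hermitian positive definite and `E` Hermitian with the bilinear bound
`|⟨u, E w⟩| ≤ C ‖A^a u‖ ‖A^b w‖`. With `D := ∫₀^∞ exp(-t A^{1/2}) E exp(-t A^{1/2}) dt` and
`F := -A^{-1/2} D A^{-1/2}`, one has `|⟨u, F w⟩| ≤ (C/2) ‖A^{a-3/4} u‖ ‖A^{b-3/4} w‖`. -/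
theorem neg_inv_sqrt_conjugated_bilinear_bound {n : ℕ}
    (A : Matrix (Fin n) (Fin n) ℂ) (hA : A.PosDef)
    (E : Matrix (Fin n) (Fin n) ℂ) (hE : E.IsHermitian) (a b C : ℝ) (hC : 0 ≤ C)
    (hbound : ∀ u w : EuclideanSpace ℂ (Fin n),
      ‖(inner ℂ u (Matrix.toEuclideanLin E w) : ℂ)‖ ≤
        C * ‖Matrix.toEuclideanLin (herPow A hA.1 a) u‖ *
          ‖Matrix.toEuclideanLin (herPow A hA.1 b) w‖)
    (D F : Matrix (Fin n) (Fin n) ℂ)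
    (hD : D = ∫ t in Set.Ici (0 : ℝ),
        matExp ((-t) • herPow A hA.1 (1/2)) * E * matExp ((-t) • herPow A hA.1 (1/2)))
    (hF : F = -(herPow A hA.1 (-(1/2)) * D * herPow A hA.1 (-(1/2)))) :
    ∀ u w : EuclideanSpace ℂ (Fin n),
      ‖(inner ℂ u (Matrix.toEuclideanLin F w) : ℂ)‖ ≤
        (C / 2) * ‖Matrix.toEuclideanLin (herPow A hA.1 (a - 3/4)) u‖ *
          ‖Matrix.toEuclideanLin (herPow A hA.1 (b - 3/4)) w‖ := by
  intro u w
  classical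
  have hm : ∀ i, 0 < hA.1.eigenvalues i := fun i => hA.eigenvalues_pos i
  -- Step 1: rewrite the integrand of `D` via the functional calculus.
  have hDD : D = ∫ t in Set.Ici (0:ℝ),
      hA.1.cfc (fun x => Real.exp (-t * x ^ (1/2 : ℝ))) * E *
        hA.1.cfc (fun x => Real.exp (-t * x ^ (1/2 : ℝ))) := by
    rw [hD]
    refine congrArg _ (funext fun t => ?_)
    rw [show matExp ((-t) • herPow A hA.1 (1/2)) =
        hA.1.cfc (fun x => Real.exp (-t * x ^ (1/2 : ℝ))) from
      FracDerivAux.matExp_cfc hA.1 (fun x : ℝ => x ^ (1/2:ℝ)) t]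
  -- Step 2: integrability of the integrand.
  have hInt : MeasureTheory.IntegrableOn (fun t : ℝ =>
      hA.1.cfc (fun x => Real.exp (-t * x ^ (1/2 : ℝ))) * E *
        hA.1.cfc (fun x => Real.exp (-t * x ^ (1/2 : ℝ)))) (Set.Ici (0:ℝ)) := by
    have hdec : (fun t : ℝ =>
        hA.1.cfc (fun x => Real.exp (-t * x ^ (1/2 : ℝ))) * E *
          hA.1.cfc (fun x => Real.exp (-t * x ^ (1/2 : ℝ))))
        = fun t => ∑ i, ∑ j,
            Real.exp (-(hA.1.eigenvalues i ^ (1/2:ℝ) + hA.1.eigenvalues j ^ (1/2:ℝ)) * t) •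
              FracDerivAux.Bm hA.1 E i j := by
      funext t
      rw [FracDerivAux.decomp hA.1 E (fun x => Real.exp (-t * x ^ (1/2:ℝ)))]
      refine Finset.sum_congr rfl fun i _ => Finset.sum_congr rfl fun j _ => ?_
      congr 1
      rw [← Real.exp_add]
      congr 1
      ring
    rw [hdec, integrableOn_Ici_iff_integrableOn_Ioi]
    refine MeasureTheory.integrable_finset_sum _ fun i _ =>
      MeasureTheory.integrable_finset_sum _ fun j _ => ?_
    refine (FracDerivAux.intOn_exp ?_).smul_const _
    exact add_pos (Real.rpow_pos_of_pos (hm i) _) (Real.rpow_pos_of_pos (hm j) _)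
  -- Step 3: the inner product as an integral.
  have hmain : (inner ℂ u (Matrix.toEuclideanLin F w) : ℂ)
      = -∫ t in Set.Ici (0:ℝ),
          FracDerivAux.Lmap
            ((hA.1.cfc fun x : ℝ => x ^ (-(1/2):ℝ)).mulVec (u : Fin n → ℂ))
            ((hA.1.cfc fun x : ℝ => x ^ (-(1/2):ℝ)).mulVec (w : Fin n → ℂ))
            (hA.1.cfc (fun x => Real.exp (-t * x ^ (1/2 : ℝ))) * E *
              hA.1.cfc (fun x => Real.exp (-t * x ^ (1/2 : ℝ)))) := by
    rw [FracDerivAux.inner_eq_dot, hF]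
    simp only [herPow]
    rw [Matrix.neg_mulVec, dotProduct_neg]
    congr 1
    rw [FracDerivAux.sandwich _ _ _ (FracDerivAux.cfc_herm hA.1 _), hDD]
    exact (ContinuousLinearMap.integral_comp_comm (FracDerivAux.Lmap _ _) hInt).symm
  -- Step 4: the pointwise bound.
  have hpt : ∀ t : ℝ,
      ‖FracDerivAux.Lmap
          ((hA.1.cfc fun x : ℝ => x ^ (-(1/2):ℝ)).mulVec (u : Fin n → ℂ))
          ((hA.1.cfc fun x : ℝ => x ^ (-(1/2):ℝ)).mulVec (w : Fin n → ℂ))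
          (hA.1.cfc (fun x => Real.exp (-t * x ^ (1/2 : ℝ))) * E *
            hA.1.cfc (fun x => Real.exp (-t * x ^ (1/2 : ℝ))))‖
        ≤ C * (Real.sqrt (FracDerivAux.Sfun hA.1 (a - 1/2) u t) *
            Real.sqrt (FracDerivAux.Sfun hA.1 (b - 1/2) w t)) := by
    intro t
    set u₁ : EuclideanSpace ℂ (Fin n) := Matrix.toEuclideanLin
      (hA.1.cfc fun x => Real.exp (-t * x ^ (1/2:ℝ)) * x ^ (-(1/2):ℝ)) u with hu₁
    set w₁ : EuclideanSpace ℂ (Fin n) := Matrix.toEuclideanLin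
      (hA.1.cfc fun x => Real.exp (-t * x ^ (1/2:ℝ)) * x ^ (-(1/2):ℝ)) w with hw₁
    have hL : FracDerivAux.Lmap
          ((hA.1.cfc fun x : ℝ => x ^ (-(1/2):ℝ)).mulVec (u : Fin n → ℂ))
          ((hA.1.cfc fun x : ℝ => x ^ (-(1/2):ℝ)).mulVec (w : Fin n → ℂ))
          (hA.1.cfc (fun x => Real.exp (-t * x ^ (1/2 : ℝ))) * E *
            hA.1.cfc (fun x => Real.exp (-t * x ^ (1/2 : ℝ))))
        = (inner ℂ u₁ (Matrix.toEuclideanLin E w₁) : ℂ) := by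
      rw [FracDerivAux.Lmap_apply, FracDerivAux.sandwich _ _ _ (FracDerivAux.cfc_herm hA.1 _),
        FracDerivAux.inner_eq_dot, hu₁, hw₁]
      have hcol : ∀ x : EuclideanSpace ℂ (Fin n),
          (hA.1.cfc fun x : ℝ => Real.exp (-t * x ^ (1/2 : ℝ))).mulVec
            ((hA.1.cfc fun x : ℝ => x ^ (-(1/2):ℝ)).mulVec (x : Fin n → ℂ))
          = (Matrix.toEuclideanLin
              (hA.1.cfc fun x => Real.exp (-t * x ^ (1/2:ℝ)) * x ^ (-(1/2):ℝ)) x : Fin n → ℂ) := by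
        intro x
        rw [Matrix.mulVec_mulVec, FracDerivAux.cfc_mul]
        rfl
      rw [hcol u, hcol w]
    have hmul : ∀ r : ℝ, herPow A hA.1 r *
          (hA.1.cfc fun x => Real.exp (-t * x ^ (1/2:ℝ)) * x ^ (-(1/2):ℝ))
        = hA.1.cfc fun y => y ^ (r - 1/2) * Real.exp (-t * y ^ ((1:ℝ)/2)) := by
      intro r
      rw [show herPow A hA.1 r = hA.1.cfc (fun x : ℝ => x ^ r) from rfl, FracDerivAux.cfc_mul]
      refine FracDerivAux.cfc_congr hA.1 fun i => ?_
      have h1 : hA.1.eigenvalues i ^ r * hA.1.eigenvalues i ^ (-(1/2):ℝ)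
          = hA.1.eigenvalues i ^ (r - 1/2) := by
        rw [← Real.rpow_add (hm i)]
        congr 1
        try ring
      calc hA.1.eigenvalues i ^ r *
            (Real.exp (-t * hA.1.eigenvalues i ^ (1/2:ℝ)) * hA.1.eigenvalues i ^ (-(1/2):ℝ))
          = hA.1.eigenvalues i ^ r * hA.1.eigenvalues i ^ (-(1/2):ℝ) *
              Real.exp (-t * hA.1.eigenvalues i ^ (1/2:ℝ)) := by ring
        _ = hA.1.eigenvalues i ^ (r - 1/2) *
              Real.exp (-t * hA.1.eigenvalues i ^ ((1:ℝ)/2)) := by rw [h1]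
    have hna : ‖Matrix.toEuclideanLin (herPow A hA.1 a) u₁‖
        = Real.sqrt (FracDerivAux.Sfun hA.1 (a - 1/2) u t) := by
      rw [hu₁, FracDerivAux.toEuclideanLin_comp, hmul a, FracDerivAux.norm_cfc_sqrt]
    have hnb : ‖Matrix.toEuclideanLin (herPow A hA.1 b) w₁‖
        = Real.sqrt (FracDerivAux.Sfun hA.1 (b - 1/2) w t) := by
      rw [hw₁, FracDerivAux.toEuclideanLin_comp, hmul b, FracDerivAux.norm_cfc_sqrt]
    calc ‖FracDerivAux.Lmap _ _ _‖ = ‖(inner ℂ u₁ (Matrix.toEuclideanLin E w₁) : ℂ)‖ := by rw [hL]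
      _ ≤ C * ‖Matrix.toEuclideanLin (herPow A hA.1 a) u₁‖ *
            ‖Matrix.toEuclideanLin (herPow A hA.1 b) w₁‖ := hbound u₁ w₁
      _ = C * (Real.sqrt (FracDerivAux.Sfun hA.1 (a - 1/2) u t) *
            Real.sqrt (FracDerivAux.Sfun hA.1 (b - 1/2) w t)) := by
          rw [hna, hnb]; ring
  -- Step 5: integrability of the dominating function.
  have hg : MeasureTheory.IntegrableOn (fun t =>
      C * (Real.sqrt (FracDerivAux.Sfun hA.1 (a - 1/2) u t) *
        Real.sqrt (FracDerivAux.Sfun hA.1 (b - 1/2) w t))) (Set.Ioi (0:ℝ)) := by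
    refine MeasureTheory.Integrable.const_mul ?_ C
    refine MeasureTheory.Integrable.mono'
      (((FracDerivAux.Sfun_integrableOn hA.1 hm (a - 1/2) u).add
        (FracDerivAux.Sfun_integrableOn hA.1 hm (b - 1/2) w)).div_const 2)
      (((Real.continuous_sqrt.comp (FracDerivAux.Sfun_cont hA.1 (a - 1/2) u)).mul
        (Real.continuous_sqrt.comp (FracDerivAux.Sfun_cont hA.1 (b - 1/2) w))).aestronglyMeasurable)
      (Filter.Eventually.of_forall fun t => ?_)
    have h1 := FracDerivAux.Sfun_nonneg hA.1 (a - 1/2) u t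
    have h2 := FracDerivAux.Sfun_nonneg hA.1 (b - 1/2) w t
    rw [Real.norm_eq_abs, abs_of_nonneg (by positivity)]
    have h3 := sq_nonneg (Real.sqrt (FracDerivAux.Sfun hA.1 (a - 1/2) u t) -
      Real.sqrt (FracDerivAux.Sfun hA.1 (b - 1/2) w t))
    rw [sub_sq, Real.sq_sqrt h1, Real.sq_sqrt h2] at h3
    simp only [Pi.add_apply]
    linarith
  -- Step 6: put everything together.
  rw [hmain, norm_neg, MeasureTheory.integral_Ici_eq_integral_Ioi]
  have hXa : (hA.1.cfc fun y : ℝ => y ^ (a - 1/2 - 1/4)) = herPow A hA.1 (a - 3/4) := by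
    rw [show a - 1/2 - 1/4 = a - 3/4 by ring]
    rfl
  have hXb : (hA.1.cfc fun y : ℝ => y ^ (b - 1/2 - 1/4)) = herPow A hA.1 (b - 3/4) := by
    rw [show b - 1/2 - 1/4 = b - 3/4 by ring]
    rfl
  have hs2 : Real.sqrt 2 * Real.sqrt 2 = 2 := Real.mul_self_sqrt (by norm_num)
  calc ‖∫ t in Set.Ioi (0:ℝ), FracDerivAux.Lmap
          ((hA.1.cfc fun x : ℝ => x ^ (-(1/2):ℝ)).mulVec (u : Fin n → ℂ))
          ((hA.1.cfc fun x : ℝ => x ^ (-(1/2):ℝ)).mulVec (w : Fin n → ℂ))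
          (hA.1.cfc (fun x => Real.exp (-t * x ^ (1/2 : ℝ))) * E *
            hA.1.cfc (fun x => Real.exp (-t * x ^ (1/2 : ℝ))))‖
      ≤ ∫ t in Set.Ioi (0:ℝ), ‖FracDerivAux.Lmap
          ((hA.1.cfc fun x : ℝ => x ^ (-(1/2):ℝ)).mulVec (u : Fin n → ℂ))
          ((hA.1.cfc fun x : ℝ => x ^ (-(1/2):ℝ)).mulVec (w : Fin n → ℂ))
          (hA.1.cfc (fun x => Real.exp (-t * x ^ (1/2 : ℝ))) * E *
            hA.1.cfc (fun x => Real.exp (-t * x ^ (1/2 : ℝ))))‖ :=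
        MeasureTheory.norm_integral_le_integral_norm _
    _ ≤ ∫ t in Set.Ioi (0:ℝ), C * (Real.sqrt (FracDerivAux.Sfun hA.1 (a - 1/2) u t) *
          Real.sqrt (FracDerivAux.Sfun hA.1 (b - 1/2) w t)) :=
        MeasureTheory.integral_mono_of_nonneg
          (Filter.Eventually.of_forall fun t => norm_nonneg _) hg
          (Filter.Eventually.of_forall fun t => hpt t)
    _ = C * ∫ t in Set.Ioi (0:ℝ), Real.sqrt (FracDerivAux.Sfun hA.1 (a - 1/2) u t) *
          Real.sqrt (FracDerivAux.Sfun hA.1 (b - 1/2) w t) :=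
        MeasureTheory.integral_const_mul C _
    _ ≤ C * (Real.sqrt (∫ t in Set.Ioi (0:ℝ), FracDerivAux.Sfun hA.1 (a - 1/2) u t) *
          Real.sqrt (∫ t in Set.Ioi (0:ℝ), FracDerivAux.Sfun hA.1 (b - 1/2) w t)) :=
        mul_le_mul_of_nonneg_left
          (FracDerivAux.hoelder_sqrt _ _
            (FracDerivAux.Sfun_nonneg hA.1 (a - 1/2) u)
            (FracDerivAux.Sfun_nonneg hA.1 (b - 1/2) w)
            (FracDerivAux.Sfun_cont hA.1 (a - 1/2) u)
            (FracDerivAux.Sfun_cont hA.1 (b - 1/2) w)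
            (FracDerivAux.Sfun_integrableOn hA.1 hm (a - 1/2) u)
            (FracDerivAux.Sfun_integrableOn hA.1 hm (b - 1/2) w)) hC
    _ = (C / 2) * ‖Matrix.toEuclideanLin (herPow A hA.1 (a - 3/4)) u‖ *
          ‖Matrix.toEuclideanLin (herPow A hA.1 (b - 3/4)) w‖ := by
        rw [FracDerivAux.integral_Sfun hA.1 hm (a - 1/2) u,
          FracDerivAux.integral_Sfun hA.1 hm (b - 1/2) w, hXa, hXb,
          Real.sqrt_div (sq_nonneg _), Real.sqrt_div (sq_nonneg _),
          Real.sqrt_sq (norm_nonneg _), Real.sqrt_sq (norm_nonneg _),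
          div_mul_div_comm, hs2]
        ring
end

section
/- Let (Γ, μ) be a measure space, let E₁, E₂ be finite-dimensional real normed spaces, let T : E₁ × E₂ × ℝᵐ → ℝ be a bounded trilinear map, let g : ℝⁿ → ℝᵐ be continuously differentiable, and let K > 0. Then there exists a constant C > 0 with the following property: whenever u₁, u₁* ∈ L²(μ; E₁) and u₂, u₂* ∈ L²(μ; E₂) satisfy ‖u₁*‖_{L²} ≤ K ‖u₁‖_{L²} and ‖u₂*‖_{L²} ≤ K ‖u₂‖_{L²}, and v₁,…,vₙ and v₁*,…,vₙ* are measurable real-valued functions on Γ with ‖vⱼ‖_{L^∞} ≤ K and ‖vⱼ*‖_{L^∞} ≤ K for all j = 1,…,n, then, writing v = (v₁,…,vₙ) and v* = (v₁*,…,vₙ*), one has |∫_Γ T(u₁, u₂, g∘v) dμ − ∫_Γ T(u₁*, u₂*, g∘v*) dμ| ≤ C ( ‖u₁ − u₁*‖_{L²} ‖u₂‖_{L²} + ‖u₂ − u₂*‖_{L²} ‖u₁‖_{L²} + ‖u₁‖_{L²} ‖u₂‖_{L²} Σⱼ ‖vⱼ − vⱼ*‖_{L^∞} ). -/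
set_option maxHeartbeats 1000000

open MeasureTheory

section Helpers

variable {Γ : Type*} [MeasurableSpace Γ] {μ : Measure Γ}

private lemma aux_cs {E₁ E₂ : Type*} [NormedAddCommGroup E₁] [NormedAddCommGroup E₂]
    {f₁ : Γ → E₁} {f₂ : Γ → E₂} (hf₁ : MemLp f₁ 2 μ) (hf₂ : MemLp f₂ 2 μ) :
    Integrable (fun x => ‖f₁ x‖ * ‖f₂ x‖) μ ∧
      ∫ x, ‖f₁ x‖ * ‖f₂ x‖ ∂μ ≤ (eLpNorm f₁ 2 μ).toReal * (eLpNorm f₂ 2 μ).toReal := by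
  set F₁ : Lp ℝ 2 μ := (hf₁.norm).toLp _
  set F₂ : Lp ℝ 2 μ := (hf₂.norm).toLp _
  have hF₁ : (F₁ : Γ → ℝ) =ᵐ[μ] fun x => ‖f₁ x‖ := MemLp.coeFn_toLp _
  have hF₂ : (F₂ : Γ → ℝ) =ᵐ[μ] fun x => ‖f₂ x‖ := MemLp.coeFn_toLp _
  have hn₁ : ‖F₁‖ = (eLpNorm f₁ 2 μ).toReal := by
    rw [Lp.norm_toLp, eLpNorm_norm]
  have hn₂ : ‖F₂‖ = (eLpNorm f₂ 2 μ).toReal := by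
    rw [Lp.norm_toLp, eLpNorm_norm]
  have hinner : Integrable (fun x => (F₁ : Γ → ℝ) x * (F₂ : Γ → ℝ) x) μ := by
    have := L2.integrable_inner (𝕜 := ℝ) F₁ F₂
    simpa [mul_comm] using this
  have hint : Integrable (fun x => ‖f₁ x‖ * ‖f₂ x‖) μ := by
    refine hinner.congr ?_
    filter_upwards [hF₁, hF₂] with x h1 h2
    rw [h1, h2]
  refine ⟨hint, ?_⟩
  have heq : ∫ x, ‖f₁ x‖ * ‖f₂ x‖ ∂μ = ∫ x, (F₁ : Γ → ℝ) x * (F₂ : Γ → ℝ) x ∂μ := by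
    refine integral_congr_ae ?_
    filter_upwards [hF₁, hF₂] with x h1 h2
    rw [h1, h2]
  have hip : ∫ x, (F₁ : Γ → ℝ) x * (F₂ : Γ → ℝ) x ∂μ = inner ℝ F₂ F₁ := by
    rw [L2.inner_def]
    refine integral_congr_ae (Filter.Eventually.of_forall fun x => ?_)
    simp [mul_comm]
  rw [heq, hip]
  calc inner ℝ F₂ F₁ ≤ ‖F₂‖ * ‖F₁‖ := real_inner_le_norm F₂ F₁
    _ = (eLpNorm f₁ 2 μ).toReal * (eLpNorm f₂ 2 μ).toReal := by rw [hn₁, hn₂]; ring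

private lemma aux_est {E₁ E₂ : Type*} [NormedAddCommGroup E₁] [NormedAddCommGroup E₂]
    {f₁ : Γ → E₁} {f₂ : Γ → E₂} {φ : Γ → ℝ} (hf₁ : MemLp f₁ 2 μ) (hf₂ : MemLp f₂ 2 μ)
    (hφ : AEStronglyMeasurable φ μ) {A : ℝ} (hA : 0 ≤ A)
    (hbd : ∀ᵐ x ∂μ, |φ x| ≤ A * (‖f₁ x‖ * ‖f₂ x‖)) :
    Integrable φ μ ∧
      |∫ x, φ x ∂μ| ≤ A * ((eLpNorm f₁ 2 μ).toReal * (eLpNorm f₂ 2 μ).toReal) := by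
  obtain ⟨hint, hcs⟩ := aux_cs hf₁ hf₂
  have hφint : Integrable φ μ := by
    refine (hint.const_mul A).mono' hφ ?_
    filter_upwards [hbd] with x hx
    simpa [Real.norm_eq_abs] using hx
  refine ⟨hφint, ?_⟩
  calc |∫ x, φ x ∂μ| ≤ ∫ x, |φ x| ∂μ := by
        simpa [Real.norm_eq_abs] using norm_integral_le_integral_norm φ (μ := μ)
    _ ≤ ∫ x, A * (‖f₁ x‖ * ‖f₂ x‖) ∂μ :=
        integral_mono_ae hφint.abs (hint.const_mul A) hbd
    _ = A * ∫ x, ‖f₁ x‖ * ‖f₂ x‖ ∂μ := integral_const_mul A _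
    _ ≤ A * ((eLpNorm f₁ 2 μ).toReal * (eLpNorm f₂ 2 μ).toReal) :=
        mul_le_mul_of_nonneg_left hcs hA

end Helpers

private lemma tri_bound {E₁ E₂ F : Type*} [NormedAddCommGroup E₁] [NormedSpace ℝ E₁]
    [NormedAddCommGroup E₂] [NormedSpace ℝ E₂] [NormedAddCommGroup F] [NormedSpace ℝ F]
    (T : E₁ →L[ℝ] E₂ →L[ℝ] F →L[ℝ] ℝ) (Mt : ℝ) (hMt : ∀ a, ‖T a‖ ≤ Mt * ‖a‖)
    (a : E₁) (b : E₂) (c : F) :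
    |T a b c| ≤ Mt * ‖a‖ * ‖b‖ * ‖c‖ := by
  calc |T a b c| = ‖T a b c‖ := (Real.norm_eq_abs _).symm
    _ ≤ ‖T a b‖ * ‖c‖ := (T a b).le_opNorm c
    _ ≤ (‖T a‖ * ‖b‖) * ‖c‖ := by
        gcongr
        exact (T a).le_opNorm b
    _ ≤ ((Mt * ‖a‖) * ‖b‖) * ‖c‖ := by
        gcongr
        exact hMt a
    _ = Mt * ‖a‖ * ‖b‖ * ‖c‖ := by ring

private lemma tri_cont {E₁ E₂ F : Type*} [NormedAddCommGroup E₁] [NormedSpace ℝ E₁]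
    [NormedAddCommGroup E₂] [NormedSpace ℝ E₂] [NormedAddCommGroup F] [NormedSpace ℝ F]
    (T : E₁ →L[ℝ] E₂ →L[ℝ] F →L[ℝ] ℝ) :
    Continuous fun p : E₁ × E₂ × F => T p.1 p.2.1 p.2.2 := by
  have c₁ : Continuous fun p : E₁ × E₂ × F => (T p.1 p.2.1 : F →L[ℝ] ℝ) :=
    isBoundedBilinearMap_apply.continuous.comp
      ((T.continuous.comp continuous_fst).prodMk (continuous_fst.comp continuous_snd))
  exact isBoundedBilinearMap_apply.continuous.comp
    (c₁.prodMk (continuous_snd.comp continuous_snd))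

/-- **Function-perturbation stability of multilinear integral forms.**
For a bounded trilinear form `T`, a `C¹` function `g : ℝᴺ → ℝᵐ` and a constant `K > 0`,
there is `C > 0` such that for all `u₁, u₁* ∈ L²(μ; E₁)`, `u₂, u₂* ∈ L²(μ; E₂)` with
`‖u₁*‖ ≤ K‖u₁‖`, `‖u₂*‖ ≤ K‖u₂‖`, and all measurable `v₁, …, v_N, v₁*, …, v_N*` bounded
a.e. by `K`, the difference of the integrals `∫ T(u₁, u₂, g∘v)` and `∫ T(u₁*, u₂*, g∘v*)`
is bounded by
`C (‖u₁ - u₁*‖₂ ‖u₂‖₂ + ‖u₂ - u₂*‖₂ ‖u₁‖₂ + ‖u₁‖₂ ‖u₂‖₂ ∑ⱼ ‖vⱼ - vⱼ*‖_∞)`. -/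
theorem multilinear_integral_function_perturbation
    {Γ : Type*} [MeasurableSpace Γ] (μ : Measure Γ)
    {E₁ E₂ : Type*} [NormedAddCommGroup E₁] [NormedSpace ℝ E₁] [FiniteDimensional ℝ E₁]
    [NormedAddCommGroup E₂] [NormedSpace ℝ E₂] [FiniteDimensional ℝ E₂]
    {m N : ℕ} (T : E₁ →L[ℝ] E₂ →L[ℝ] (Fin m → ℝ) →L[ℝ] ℝ)
    (g : (Fin N → ℝ) → (Fin m → ℝ)) (hg : ContDiff ℝ 1 g) (K : ℝ) (hK : 0 < K) :
    ∃ C > 0, ∀ (u₁ u₁s : Lp E₁ 2 μ) (u₂ u₂s : Lp E₂ 2 μ) (v vs : Fin N → Γ → ℝ),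
      ‖u₁s‖ ≤ K * ‖u₁‖ → ‖u₂s‖ ≤ K * ‖u₂‖ →
      (∀ j, Measurable (v j)) → (∀ j, Measurable (vs j)) →
      (∀ j, ∀ᵐ x ∂μ, |v j x| ≤ K) → (∀ j, ∀ᵐ x ∂μ, |vs j x| ≤ K) →
      |(∫ x, T ((u₁ : Γ → E₁) x) ((u₂ : Γ → E₂) x) (g (fun j => v j x)) ∂μ) -
          ∫ x, T ((u₁s : Γ → E₁) x) ((u₂s : Γ → E₂) x) (g (fun j => vs j x)) ∂μ| ≤
        C * (‖u₁ - u₁s‖ * ‖u₂‖ + ‖u₂ - u₂s‖ * ‖u₁‖ +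
          ‖u₁‖ * ‖u₂‖ * ∑ j, (eLpNorm (v j - vs j) ⊤ μ).toReal) := by
  -- bound for g on the ball
  obtain ⟨M₀, hM₀⟩ := (isCompact_closedBall (0 : Fin N → ℝ) K).exists_bound_of_continuousOn
    hg.continuous.continuousOn
  set M : ℝ := max M₀ 0 with hMdef
  have hM : 0 ≤ M := le_max_right _ _
  have hgM : ∀ y ∈ Metric.closedBall (0 : Fin N → ℝ) K, ‖g y‖ ≤ M :=
    fun y hy => (hM₀ y hy).trans (le_max_left _ _)
  -- Lipschitz constant for g on the ball
  obtain ⟨L₀, hL₀⟩ := (isCompact_closedBall (0 : Fin N → ℝ) K).exists_bound_of_continuousOn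
    (hg.continuous_fderiv one_ne_zero).continuousOn
  set L : NNReal := ⟨max L₀ 0, le_max_right _ _⟩ with hLdef
  have hLip : LipschitzOnWith L g (Metric.closedBall (0 : Fin N → ℝ) K) := by
    refine Convex.lipschitzOnWith_of_nnnorm_fderiv_le
      (fun x _ => hg.differentiable one_ne_zero x) (fun x hx => ?_) (convex_closedBall _ _)
    rw [← NNReal.coe_le_coe, coe_nnnorm]
    exact (hL₀ x hx).trans (le_max_left _ _)
  have hbound := (ContinuousLinearMap.isBoundedLinearMap (𝕜 := ℝ)
    (F := E₂ →L[ℝ] ((Fin m → ℝ) →L[ℝ] ℝ)) T).bound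
  obtain ⟨Mt, hMtpos, hMt⟩ := hbound
  set C : ℝ := Mt * M + Mt * M * K + Mt * (L : ℝ) * K * K + 1 with hCdef
  have hTnn : (0:ℝ) ≤ Mt := hMtpos.le
  have hC1 : (0:ℝ) ≤ Mt * M := mul_nonneg hTnn hM
  have hC2 : (0:ℝ) ≤ Mt * M * K := mul_nonneg hC1 hK.le
  have hC3 : (0:ℝ) ≤ Mt * (L : ℝ) * K * K :=
    mul_nonneg (mul_nonneg (mul_nonneg hTnn L.coe_nonneg) hK.le) hK.le
  have hCpos : 0 < C := by rw [hCdef]; linarith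
  refine ⟨C, hCpos, fun u₁ u₁s u₂ u₂s v vs hu₁ hu₂ hv hvs hvb hvsb => ?_⟩
  set w : Γ → Fin N → ℝ := fun x j => v j x with hwdef
  set ws : Γ → Fin N → ℝ := fun x j => vs j x with hwsdef
  set S : ℝ := ∑ j, (eLpNorm (v j - vs j) ⊤ μ).toReal with hSdef
  have hS : 0 ≤ S := Finset.sum_nonneg fun _ _ => ENNReal.toReal_nonneg
  -- a.e. membership in the ball
  have hwK : ∀ᵐ x ∂μ, w x ∈ Metric.closedBall (0 : Fin N → ℝ) K := by
    have := (ae_all_iff.2 hvb)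
    filter_upwards [this] with x hx
    rw [Metric.mem_closedBall, dist_zero_right]
    rw [pi_norm_le_iff_of_nonneg hK.le]
    intro j; simpa [Real.norm_eq_abs] using hx j
  have hwsK : ∀ᵐ x ∂μ, ws x ∈ Metric.closedBall (0 : Fin N → ℝ) K := by
    have := (ae_all_iff.2 hvsb)
    filter_upwards [this] with x hx
    rw [Metric.mem_closedBall, dist_zero_right]
    rw [pi_norm_le_iff_of_nonneg hK.le]
    intro j; simpa [Real.norm_eq_abs] using hx j
  -- a.e. bound on each coordinate difference by its essential sup
  have hcoord : ∀ j, ∀ᵐ x ∂μ, |v j x - vs j x| ≤ (eLpNorm (v j - vs j) ⊤ μ).toReal := by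
    intro j
    have hfin : eLpNorm (v j - vs j) ⊤ μ ≠ ⊤ := by
      rw [eLpNorm_exponent_top]
      refine ne_top_of_le_ne_top ENNReal.ofReal_ne_top
        (eLpNormEssSup_le_of_ae_bound (C := 2 * K) ?_)
      filter_upwards [hvb j, hvsb j] with x h1 h2
      have : |v j x - vs j x| ≤ |v j x| + |vs j x| := abs_sub _ _
      simp only [Pi.sub_apply, Real.norm_eq_abs]
      linarith
    have hae := ae_le_eLpNormEssSup (f := v j - vs j) (μ := μ)
    filter_upwards [hae] with x hx
    rw [eLpNorm_exponent_top]
    have := ENNReal.toReal_mono (by rwa [eLpNorm_exponent_top] at hfin) hx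
    simpa [Real.norm_eq_abs] using this
  -- a.e. Lipschitz estimate
  have hdiff : ∀ᵐ x ∂μ, ‖g (w x) - g (ws x)‖ ≤ (L : ℝ) * S := by
    have hall := ae_all_iff.2 hcoord
    filter_upwards [hwK, hwsK, hall] with x hx1 hx2 hx3
    have hd : dist (g (w x)) (g (ws x)) ≤ (L : ℝ) * dist (w x) (ws x) :=
      hLip.dist_le_mul _ hx1 _ hx2
    have hws : dist (w x) (ws x) ≤ S := by
      rw [dist_eq_norm, pi_norm_le_iff_of_nonneg hS]
      intro j
      have h1 : |v j x - vs j x| ≤ (eLpNorm (v j - vs j) ⊤ μ).toReal := hx3 j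
      have h2 : (eLpNorm (v j - vs j) ⊤ μ).toReal ≤ S :=
        Finset.single_le_sum (f := fun j => (eLpNorm (v j - vs j) ⊤ μ).toReal)
          (fun _ _ => ENNReal.toReal_nonneg) (Finset.mem_univ j)
      simpa [Real.norm_eq_abs] using h1.trans h2
    rw [← dist_eq_norm]
    calc dist (g (w x)) (g (ws x)) ≤ (L : ℝ) * dist (w x) (ws x) := hd
      _ ≤ (L : ℝ) * S := mul_le_mul_of_nonneg_left hws L.coe_nonneg
  have hgwM : ∀ᵐ x ∂μ, ‖g (w x)‖ ≤ M := by
    filter_upwards [hwK] with x hx using hgM _ hx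
  have hgwsM : ∀ᵐ x ∂μ, ‖g (ws x)‖ ≤ M := by
    filter_upwards [hwsK] with x hx using hgM _ hx
  -- measurability
  have hw : Measurable w := measurable_pi_lambda _ hv
  have hws' : Measurable ws := measurable_pi_lambda _ hvs
  have hgw : AEStronglyMeasurable (fun x => g (w x)) μ :=
    ((hg.continuous.measurable).comp hw).aestronglyMeasurable
  have hgws : AEStronglyMeasurable (fun x => g (ws x)) μ :=
    ((hg.continuous.measurable).comp hws').aestronglyMeasurable
  have h₁ : MemLp (u₁ : Γ → E₁) 2 μ := Lp.memLp u₁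
  have h₁s : MemLp (u₁s : Γ → E₁) 2 μ := Lp.memLp u₁s
  have h₂ : MemLp (u₂ : Γ → E₂) 2 μ := Lp.memLp u₂
  have h₂s : MemLp (u₂s : Γ → E₂) 2 μ := Lp.memLp u₂s
  -- norm identities
  have e₁ : (eLpNorm (u₁ : Γ → E₁) 2 μ).toReal = ‖u₁‖ := (Lp.norm_def u₁).symm
  have e₁s : (eLpNorm (u₁s : Γ → E₁) 2 μ).toReal = ‖u₁s‖ := (Lp.norm_def u₁s).symm
  have e₂ : (eLpNorm (u₂ : Γ → E₂) 2 μ).toReal = ‖u₂‖ := (Lp.norm_def u₂).symm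
  have e₂s : (eLpNorm (u₂s : Γ → E₂) 2 μ).toReal = ‖u₂s‖ := (Lp.norm_def u₂s).symm
  have e₁d : (eLpNorm ((u₁ : Γ → E₁) - (u₁s : Γ → E₁)) 2 μ).toReal
      = ‖u₁ - u₁s‖ := by
    rw [Lp.norm_def]
    congr 1
    exact eLpNorm_congr_ae (Lp.coeFn_sub u₁ u₁s).symm
  have e₂d : (eLpNorm ((u₂ : Γ → E₂) - (u₂s : Γ → E₂)) 2 μ).toReal
      = ‖u₂ - u₂s‖ := by
    rw [Lp.norm_def]
    congr 1
    exact eLpNorm_congr_ae (Lp.coeFn_sub u₂ u₂s).symm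
  -- helper to produce a.e. measurability of trilinear compositions
  have mk_meas : ∀ (f₁ : Γ → E₁) (f₂ : Γ → E₂) (h : Γ → Fin m → ℝ),
      AEStronglyMeasurable f₁ μ → AEStronglyMeasurable f₂ μ → AEStronglyMeasurable h μ →
      AEStronglyMeasurable (fun x => T (f₁ x) (f₂ x) (h x)) μ := by
    intro f₁ f₂ h hf₁ hf₂ hh
    exact (tri_cont T).comp_aestronglyMeasurable (hf₁.prodMk (hf₂.prodMk hh))
  -- the three perturbation pieces
  obtain ⟨hp₁int, hp₁⟩ := aux_est
    (φ := fun x => T ((u₁ : Γ → E₁) x - (u₁s : Γ → E₁) x) ((u₂ : Γ → E₂) x) (g (w x)))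
    ((h₁.sub h₁s)) h₂
    (mk_meas _ _ _ (h₁.aestronglyMeasurable.sub h₁s.aestronglyMeasurable)
      h₂.aestronglyMeasurable hgw) (A := Mt * M) hC1
    (by
      filter_upwards [hgwM] with x hx
      calc |T ((u₁ : Γ → E₁) x - (u₁s : Γ → E₁) x) ((u₂ : Γ → E₂) x) (g (w x))|
          ≤ Mt * ‖(u₁ : Γ → E₁) x - (u₁s : Γ → E₁) x‖ * ‖(u₂ : Γ → E₂) x‖ * ‖g (w x)‖ :=
            tri_bound T Mt hMt _ _ _
        _ ≤ Mt * ‖(u₁ : Γ → E₁) x - (u₁s : Γ → E₁) x‖ * ‖(u₂ : Γ → E₂) x‖ * M := by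
            gcongr
        _ = Mt * M * (‖(u₁ : Γ → E₁) x - (u₁s : Γ → E₁) x‖ * ‖(u₂ : Γ → E₂) x‖) := by ring)
  obtain ⟨hp₂int, hp₂⟩ := aux_est
    (φ := fun x => T ((u₁s : Γ → E₁) x) ((u₂ : Γ → E₂) x - (u₂s : Γ → E₂) x) (g (w x)))
    h₁s (h₂.sub h₂s)
    (mk_meas _ _ _ h₁s.aestronglyMeasurable
      (h₂.aestronglyMeasurable.sub h₂s.aestronglyMeasurable) hgw) (A := Mt * M) hC1
    (by
      filter_upwards [hgwM] with x hx
      calc |T ((u₁s : Γ → E₁) x) ((u₂ : Γ → E₂) x - (u₂s : Γ → E₂) x) (g (w x))|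
          ≤ Mt * ‖(u₁s : Γ → E₁) x‖ * ‖(u₂ : Γ → E₂) x - (u₂s : Γ → E₂) x‖ * ‖g (w x)‖ :=
            tri_bound T Mt hMt _ _ _
        _ ≤ Mt * ‖(u₁s : Γ → E₁) x‖ * ‖(u₂ : Γ → E₂) x - (u₂s : Γ → E₂) x‖ * M := by
            gcongr
        _ = Mt * M * (‖(u₁s : Γ → E₁) x‖ * ‖(u₂ : Γ → E₂) x - (u₂s : Γ → E₂) x‖) := by ring)
  have hC3' : (0:ℝ) ≤ Mt * ((L : ℝ) * S) :=
    mul_nonneg hTnn (mul_nonneg L.coe_nonneg hS)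
  obtain ⟨hp₃int, hp₃⟩ := aux_est
    (φ := fun x => T ((u₁s : Γ → E₁) x) ((u₂s : Γ → E₂) x) (g (w x) - g (ws x)))
    h₁s h₂s
    (mk_meas _ _ _ h₁s.aestronglyMeasurable h₂s.aestronglyMeasurable (hgw.sub hgws))
    (A := Mt * ((L : ℝ) * S)) hC3'
    (by
      filter_upwards [hdiff] with x hx
      calc |T ((u₁s : Γ → E₁) x) ((u₂s : Γ → E₂) x) (g (w x) - g (ws x))|
          ≤ Mt * ‖(u₁s : Γ → E₁) x‖ * ‖(u₂s : Γ → E₂) x‖ * ‖g (w x) - g (ws x)‖ :=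
            tri_bound T Mt hMt _ _ _
        _ ≤ Mt * ‖(u₁s : Γ → E₁) x‖ * ‖(u₂s : Γ → E₂) x‖ * ((L : ℝ) * S) := by
            gcongr
        _ = Mt * ((L : ℝ) * S) * (‖(u₁s : Γ → E₁) x‖ * ‖(u₂s : Γ → E₂) x‖) := by ring)
  -- integrability of the two main integrands
  obtain ⟨hAint, -⟩ := aux_est
    (φ := fun x => T ((u₁ : Γ → E₁) x) ((u₂ : Γ → E₂) x) (g (w x)))
    h₁ h₂ (mk_meas _ _ _ h₁.aestronglyMeasurable h₂.aestronglyMeasurable hgw)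
    (A := Mt * M) hC1
    (by
      filter_upwards [hgwM] with x hx
      calc |T ((u₁ : Γ → E₁) x) ((u₂ : Γ → E₂) x) (g (w x))|
          ≤ Mt * ‖(u₁ : Γ → E₁) x‖ * ‖(u₂ : Γ → E₂) x‖ * ‖g (w x)‖ := tri_bound T Mt hMt _ _ _
        _ ≤ Mt * ‖(u₁ : Γ → E₁) x‖ * ‖(u₂ : Γ → E₂) x‖ * M := by gcongr
        _ = Mt * M * (‖(u₁ : Γ → E₁) x‖ * ‖(u₂ : Γ → E₂) x‖) := by ring)
  obtain ⟨hBint, -⟩ := aux_est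
    (φ := fun x => T ((u₁s : Γ → E₁) x) ((u₂s : Γ → E₂) x) (g (ws x)))
    h₁s h₂s (mk_meas _ _ _ h₁s.aestronglyMeasurable h₂s.aestronglyMeasurable hgws)
    (A := Mt * M) hC1
    (by
      filter_upwards [hgwsM] with x hx
      calc |T ((u₁s : Γ → E₁) x) ((u₂s : Γ → E₂) x) (g (ws x))|
          ≤ Mt * ‖(u₁s : Γ → E₁) x‖ * ‖(u₂s : Γ → E₂) x‖ * ‖g (ws x)‖ := tri_bound T Mt hMt _ _ _
        _ ≤ Mt * ‖(u₁s : Γ → E₁) x‖ * ‖(u₂s : Γ → E₂) x‖ * M := by gcongr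
        _ = Mt * M * (‖(u₁s : Γ → E₁) x‖ * ‖(u₂s : Γ → E₂) x‖) := by ring)
  -- split the difference of integrals
  have hsplit :
      (∫ x, T ((u₁ : Γ → E₁) x) ((u₂ : Γ → E₂) x) (g (w x)) ∂μ) -
        (∫ x, T ((u₁s : Γ → E₁) x) ((u₂s : Γ → E₂) x) (g (ws x)) ∂μ) =
      (∫ x, T ((u₁ : Γ → E₁) x - (u₁s : Γ → E₁) x) ((u₂ : Γ → E₂) x) (g (w x)) ∂μ) +
      (∫ x, T ((u₁s : Γ → E₁) x) ((u₂ : Γ → E₂) x - (u₂s : Γ → E₂) x) (g (w x)) ∂μ) +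
      (∫ x, T ((u₁s : Γ → E₁) x) ((u₂s : Γ → E₂) x) (g (w x) - g (ws x)) ∂μ) := by
    calc (∫ x, T ((u₁ : Γ → E₁) x) ((u₂ : Γ → E₂) x) (g (w x)) ∂μ) -
          (∫ x, T ((u₁s : Γ → E₁) x) ((u₂s : Γ → E₂) x) (g (ws x)) ∂μ)
        = ∫ x, (T ((u₁ : Γ → E₁) x - (u₁s : Γ → E₁) x) ((u₂ : Γ → E₂) x) (g (w x)) +
            T ((u₁s : Γ → E₁) x) ((u₂ : Γ → E₂) x - (u₂s : Γ → E₂) x) (g (w x))) +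
            T ((u₁s : Γ → E₁) x) ((u₂s : Γ → E₂) x) (g (w x) - g (ws x)) ∂μ := by
          rw [← integral_sub hAint hBint]
          refine integral_congr_ae (Filter.Eventually.of_forall fun x => ?_)
          simp only [map_sub, ContinuousLinearMap.sub_apply]
          ring
      _ = (∫ x, T ((u₁ : Γ → E₁) x - (u₁s : Γ → E₁) x) ((u₂ : Γ → E₂) x) (g (w x)) +
            T ((u₁s : Γ → E₁) x) ((u₂ : Γ → E₂) x - (u₂s : Γ → E₂) x) (g (w x)) ∂μ) +
            ∫ x, T ((u₁s : Γ → E₁) x) ((u₂s : Γ → E₂) x) (g (w x) - g (ws x)) ∂μ :=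
          integral_add (hp₁int.add hp₂int) hp₃int
      _ = (∫ x, T ((u₁ : Γ → E₁) x - (u₁s : Γ → E₁) x) ((u₂ : Γ → E₂) x) (g (w x)) ∂μ) +
            (∫ x, T ((u₁s : Γ → E₁) x) ((u₂ : Γ → E₂) x - (u₂s : Γ → E₂) x) (g (w x)) ∂μ) +
            ∫ x, T ((u₁s : Γ → E₁) x) ((u₂s : Γ → E₂) x) (g (w x) - g (ws x)) ∂μ := by
          rw [integral_add hp₁int hp₂int]
  -- put all the estimates together
  rw [e₁d, e₂] at hp₁
  rw [e₁s, e₂d] at hp₂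
  rw [e₁s, e₂s] at hp₃
  have hb₂ : |∫ x, T ((u₁s : Γ → E₁) x) ((u₂ : Γ → E₂) x - (u₂s : Γ → E₂) x) (g (w x)) ∂μ|
      ≤ Mt * M * K * (‖u₂ - u₂s‖ * ‖u₁‖) := by
    refine hp₂.trans ?_
    have : ‖u₁s‖ * ‖u₂ - u₂s‖ ≤ (K * ‖u₁‖) * ‖u₂ - u₂s‖ :=
      mul_le_mul_of_nonneg_right hu₁ (norm_nonneg _)
    calc Mt * M * (‖u₁s‖ * ‖u₂ - u₂s‖) ≤ Mt * M * ((K * ‖u₁‖) * ‖u₂ - u₂s‖) :=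
          mul_le_mul_of_nonneg_left this hC1
      _ = Mt * M * K * (‖u₂ - u₂s‖ * ‖u₁‖) := by ring
  have hb₃ : |∫ x, T ((u₁s : Γ → E₁) x) ((u₂s : Γ → E₂) x) (g (w x) - g (ws x)) ∂μ|
      ≤ Mt * (L : ℝ) * K * K * (‖u₁‖ * ‖u₂‖ * S) := by
    refine hp₃.trans ?_
    have h1 : ‖u₁s‖ * ‖u₂s‖ ≤ (K * ‖u₁‖) * (K * ‖u₂‖) :=
      mul_le_mul hu₁ hu₂ (norm_nonneg _) (mul_nonneg hK.le (norm_nonneg _))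
    calc Mt * ((L : ℝ) * S) * (‖u₁s‖ * ‖u₂s‖)
        ≤ Mt * ((L : ℝ) * S) * ((K * ‖u₁‖) * (K * ‖u₂‖)) :=
          mul_le_mul_of_nonneg_left h1 hC3'
      _ = Mt * (L : ℝ) * K * K * (‖u₁‖ * ‖u₂‖ * S) := by ring
  have ha : 0 ≤ ‖u₁ - u₁s‖ * ‖u₂‖ := mul_nonneg (norm_nonneg _) (norm_nonneg _)
  have hb : 0 ≤ ‖u₂ - u₂s‖ * ‖u₁‖ := mul_nonneg (norm_nonneg _) (norm_nonneg _)
  have hc : 0 ≤ ‖u₁‖ * ‖u₂‖ * S :=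
    mul_nonneg (mul_nonneg (norm_nonneg _) (norm_nonneg _)) hS
  have habs : |(∫ x, T ((u₁ : Γ → E₁) x) ((u₂ : Γ → E₂) x) (g (w x)) ∂μ) -
      (∫ x, T ((u₁s : Γ → E₁) x) ((u₂s : Γ → E₂) x) (g (ws x)) ∂μ)|
      ≤ Mt * M * (‖u₁ - u₁s‖ * ‖u₂‖) + Mt * M * K * (‖u₂ - u₂s‖ * ‖u₁‖)
        + Mt * (L : ℝ) * K * K * (‖u₁‖ * ‖u₂‖ * S) := by
    rw [hsplit]
    refine (abs_add_three _ _ _).trans ?_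
    exact add_le_add (add_le_add hp₁ hb₂) hb₃
  have hterm1 : Mt * M * (‖u₁ - u₁s‖ * ‖u₂‖) ≤ C * (‖u₁ - u₁s‖ * ‖u₂‖) := by
    apply mul_le_mul_of_nonneg_right _ ha
    rw [hCdef]; linarith
  have hterm2 : Mt * M * K * (‖u₂ - u₂s‖ * ‖u₁‖) ≤ C * (‖u₂ - u₂s‖ * ‖u₁‖) := by
    apply mul_le_mul_of_nonneg_right _ hb
    rw [hCdef]; linarith
  have hterm3 : Mt * (L : ℝ) * K * K * (‖u₁‖ * ‖u₂‖ * S) ≤ C * (‖u₁‖ * ‖u₂‖ * S) := by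
    apply mul_le_mul_of_nonneg_right _ hc
    rw [hCdef]; linarith
  calc |(∫ x, T ((u₁ : Γ → E₁) x) ((u₂ : Γ → E₂) x) (g (fun j => v j x)) ∂μ) -
      ∫ x, T ((u₁s : Γ → E₁) x) ((u₂s : Γ → E₂) x) (g (fun j => vs j x)) ∂μ|
      ≤ Mt * M * (‖u₁ - u₁s‖ * ‖u₂‖) + Mt * M * K * (‖u₂ - u₂s‖ * ‖u₁‖)
        + Mt * (L : ℝ) * K * K * (‖u₁‖ * ‖u₂‖ * S) := habs
    _ ≤ C * (‖u₁ - u₁s‖ * ‖u₂‖) + C * (‖u₂ - u₂s‖ * ‖u₁‖) + C * (‖u₁‖ * ‖u₂‖ * S) := by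
        linarith
    _ = C * (‖u₁ - u₁s‖ * ‖u₂‖ + ‖u₂ - u₂s‖ * ‖u₁‖ + ‖u₁‖ * ‖u₂‖ * S) := by ring
end
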